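/- arXiv:0804.4012 — 4 statements merged into one kernel-verified Lean document; each statement's English description precedes it below -/
import Mathlib

section
/- Let X be a compact metric space and let F be a nonempty family of continuous real-valued functions on X such that -f ∈ F whenever f ∈ F. For a finite Borel measure μ on X define Φ(μ) = sup_{f ∈ F} ∫ f dμ ∈ [0, ∞]. If the only finite Borel measure μ on X satisfying ∫ f dμ = 0 for every f ∈ F is the zero measure, then there exists a constant c < ∞ such that μ(X) ≤ c · Φ(μ) for every finite Borel measure μ on X. -/
open MeasureTheory Filter
open scoped ENNReal NNReal Topology

open Set
set_option linter.unusedSectionVars false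

section Riesz
variable {X : Type*} [MetricSpace X] [CompactSpace X]

/-- test functions for an open set -/
def IsTest (φ : C(X, ℝ)) (U : Set X) : Prop :=
  (∀ x, φ x ∈ Set.Icc (0:ℝ) 1) ∧ tsupport φ ⊆ U

lemma isTest_zero (U : Set X) : IsTest (0 : C(X,ℝ)) U := by
  constructor
  · intro x; simp [Set.mem_Icc, zero_le_one]
  · have : tsupport (⇑(0 : C(X,ℝ))) = ∅ := by
      simp [tsupport, Function.support]
    rw [this]; exact empty_subset _

structure PosLin (Λ : C(X,ℝ) → ℝ) : Prop where
  add : ∀ f g, Λ (f + g) = Λ f + Λ g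
  smul : ∀ (c : ℝ) f, Λ (c • f) = c * Λ f
  pos : ∀ f, (∀ x, 0 ≤ f x) → 0 ≤ Λ f

namespace PosLin
variable {Λ : C(X,ℝ) → ℝ}

lemma zero (hΛ : PosLin Λ) : Λ 0 = 0 := by
  have := hΛ.smul 0 0; simpa using this

lemma mono (hΛ : PosLin Λ) {f g : C(X,ℝ)} (h : ∀ x, f x ≤ g x) : Λ f ≤ Λ g := by
  have h1 : Λ g = Λ f + Λ (g - f) := by
    have h0 : f + (g - f) = g := by ring
    calc Λ g = Λ (f + (g - f)) := by rw [h0]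
    _ = Λ f + Λ (g - f) := hΛ.add _ _
  have h2 : 0 ≤ Λ (g - f) := hΛ.pos _ (fun x => by
    simp only [ContinuousMap.sub_apply, sub_nonneg]; exact h x)
  linarith

lemma map_sum (hΛ : PosLin Λ) {ι : Type*} (s : Finset ι) (g : ι → C(X,ℝ)) :
    Λ (∑ i ∈ s, g i) = ∑ i ∈ s, Λ (g i) := by
  classical
  induction s using Finset.induction_on with
  | empty => simpa using hΛ.zero
  | insert a s' hx ih =>
                    rw [Finset.sum_insert hx, Finset.sum_insert hx, hΛ.add, ih]

end PosLin

/-- The set-function on open sets -/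
noncomputable def lam (Λ : C(X,ℝ) → ℝ) (U : Set X) : ℝ≥0∞ :=
  ⨆ φ : {φ : C(X,ℝ) // IsTest φ U}, ENNReal.ofReal (Λ φ)

lemma test_le_lam {Λ : C(X,ℝ) → ℝ} {φ : C(X,ℝ)} {U : Set X} (h : IsTest φ U) :
    ENNReal.ofReal (Λ φ) ≤ lam Λ U :=
  le_iSup (fun ψ : {φ : C(X,ℝ) // IsTest φ U} => ENNReal.ofReal (Λ ψ)) ⟨φ, h⟩

lemma lam_le {Λ : C(X,ℝ) → ℝ} {U : Set X} {a : ℝ≥0∞}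
    (h : ∀ φ : C(X,ℝ), IsTest φ U → ENNReal.ofReal (Λ φ) ≤ a) : lam Λ U ≤ a :=
  iSup_le fun ⟨φ, hφ⟩ => h φ hφ

lemma lam_mono (Λ : C(X,ℝ) → ℝ) {U V : Set X} (h : U ⊆ V) : lam Λ U ≤ lam Λ V :=
  lam_le fun φ hφ => test_le_lam ⟨hφ.1, hφ.2.trans h⟩

end Riesz

section Riesz2
variable {X : Type*} [MetricSpace X] [CompactSpace X] {Λ : C(X,ℝ) → ℝ}

lemma lam_le_tsum (hΛ : PosLin Λ) {U : Set X} (A : ℕ → Set X)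
    (hA : ∀ n, IsOpen (A n)) (hU : U ⊆ ⋃ n, A n) :
    lam Λ U ≤ ∑' n, lam Λ (A n) := by
  refine lam_le fun φ hφ => ?_
  have hK : IsCompact (tsupport φ) := (isClosed_tsupport _).isCompact
  obtain ⟨t, ht⟩ := hK.elim_finite_subcover A hA (hφ.2.trans hU)
  -- partition of unity subordinate to the finite cover, on the closed set tsupport φ
  have htcov : tsupport φ ⊆ ⋃ i : ↥t, A i := by
    refine ht.trans ?_
    intro x hx
    simp only [Set.mem_iUnion] at hx ⊢
    obtain ⟨i, hi, hxi⟩ := hx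
    exact ⟨⟨i, hi⟩, hxi⟩
  obtain ⟨p, hp⟩ := PartitionOfUnity.exists_isSubordinate (isClosed_tsupport φ)
    (fun i : ↥t => A i) (fun i => hA i) htcov
  have hrepr : φ = ∑ i : ↥t, p i * φ := by
    ext x
    rw [ContinuousMap.coe_sum]
    simp only [Finset.sum_apply, ContinuousMap.mul_apply]
    by_cases hx : x ∈ tsupport φ
    · have h1 : ∑ᶠ i, p i x = 1 := p.sum_eq_one hx
      rw [finsum_eq_sum_of_fintype] at h1
      rw [← Finset.sum_mul, h1, one_mul]
    · have h0 : φ x = 0 := image_eq_zero_of_notMem_tsupport hx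
      simp [h0]
  have htest : ∀ i : ↥t, IsTest (p i * φ) (A i) := by
    intro i
    constructor
    · intro x
      constructor
      · exact mul_nonneg (p.nonneg i x) (hφ.1 x).1
      · exact mul_le_one₀ (p.le_one i x) (hφ.1 x).1 (hφ.1 x).2
    · exact (tsupport_mul_subset_left).trans (hp i)
  calc ENNReal.ofReal (Λ φ) = ENNReal.ofReal (∑ i : ↥t, Λ (p i * φ)) := by
        conv_lhs => rw [hrepr]
        rw [hΛ.map_sum]
    _ = ∑ i : ↥t, ENNReal.ofReal (Λ (p i * φ)) := by
        rw [ENNReal.ofReal_sum_of_nonneg]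
        intro i _
        exact hΛ.pos _ fun x => mul_nonneg (p.nonneg i x) (hφ.1 x).1
    _ ≤ ∑ i : ↥t, lam Λ (A i) := Finset.sum_le_sum fun i _ => test_le_lam (htest i)
    _ = ∑ i ∈ t, lam Λ (A i) := (Finset.sum_coe_sort t (fun i => lam Λ (A i)))
    _ ≤ ∑' n, lam Λ (A n) := ENNReal.sum_le_tsum t

end Riesz2

section Riesz3
variable {X : Type*} [MetricSpace X] [CompactSpace X] {Λ : C(X,ℝ) → ℝ}

open scoped Classical in
/-- Extend `lam` to all sets, assigning `∞` to non-open sets. -/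
noncomputable def m0 (Λ : C(X,ℝ) → ℝ) (A : Set X) : ℝ≥0∞ :=
  if IsOpen A then lam Λ A else ∞

open scoped Classical in
lemma m0_if (A : Set X) : m0 Λ A = if IsOpen A then lam Λ A else ∞ := rfl

lemma m0_open {A : Set X} (h : IsOpen A) : m0 Λ A = lam Λ A := by
  classical rw [m0_if, if_pos h]

lemma m0_not_open {A : Set X} (h : ¬ IsOpen A) : m0 Λ A = ∞ := by
  classical rw [m0_if, if_neg h]

lemma m0_empty (hΛ : PosLin Λ) : m0 Λ (∅ : Set X) = 0 := by
  rw [m0_open isOpen_empty]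
  refine le_antisymm (lam_le fun φ hφ => ?_) zero_le
  have : φ = 0 := by
    ext x
    by_contra hx
    have : x ∈ tsupport φ := subset_closure (by simpa [Function.mem_support] using hx)
    exact absurd (hφ.2 this) (Set.notMem_empty x)
  rw [this, hΛ.zero]
  simp

/-- the outer measure -/
noncomputable def OM (hΛ : PosLin Λ) : OuterMeasure X :=
  OuterMeasure.ofFunction (m0 Λ) (m0_empty hΛ)

lemma OM_open (hΛ : PosLin Λ) {U : Set X} (hU : IsOpen U) : OM hΛ U = lam Λ U := by
  refine le_antisymm ((OuterMeasure.ofFunction_le _).trans_eq (m0_open hU)) ?_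
  rw [OM, OuterMeasure.ofFunction_apply]
  refine le_iInf₂ fun A hA => ?_
  by_cases h : ∀ n, IsOpen (A n)
  · calc lam Λ U ≤ ∑' n, lam Λ (A n) := lam_le_tsum hΛ A h hA
      _ = ∑' n, m0 Λ (A n) := by
          refine tsum_congr fun n => ?_
          rw [m0_open (h n)]
  · push_neg at h
    obtain ⟨n, hn⟩ := h
    have : m0 Λ (A n) = ∞ := m0_not_open hn
    calc lam Λ U ≤ ∞ := le_top
      _ = m0 Λ (A n) := this.symm
      _ ≤ ∑' n, m0 Λ (A n) := ENNReal.le_tsum n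

end Riesz3

section Riesz4
variable {X : Type*} [MetricSpace X] [CompactSpace X] {Λ : C(X,ℝ) → ℝ}

lemma lam_add_lam_le (hΛ : PosLin Λ) {U V W : Set X} (hVU : V ⊆ U) (hWU : W ⊆ U)
    (hd : Disjoint V W) : lam Λ V + lam Λ W ≤ lam Λ U := by
  have : Nonempty {φ : C(X,ℝ) // IsTest φ V} := ⟨0, isTest_zero V⟩
  have : Nonempty {φ : C(X,ℝ) // IsTest φ W} := ⟨0, isTest_zero W⟩
  rw [lam, lam]
  refine ENNReal.iSup_add_iSup_le ?_
  rintro ⟨φ, hφ⟩ ⟨ψ, hψ⟩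
  have hsupφ : ∀ x, φ x ≠ 0 → x ∈ V := fun x hx =>
    hφ.2 (subset_closure (by simpa [Function.mem_support] using hx))
  have hsupψ : ∀ x, ψ x ≠ 0 → x ∈ W := fun x hx =>
    hψ.2 (subset_closure (by simpa [Function.mem_support] using hx))
  have htest : IsTest (φ + ψ) U := by
    constructor
    · intro x
      rcases eq_or_ne (φ x) 0 with h | h
      · simpa [h] using ⟨(hψ.1 x).1, (hψ.1 x).2⟩
      · have hψ0 : ψ x = 0 := by
          by_contra h2
          exact (Set.disjoint_left.mp hd (hsupφ x h)) (hsupψ x h2)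
        simpa [hψ0] using ⟨(hφ.1 x).1, (hφ.1 x).2⟩
    · refine subset_trans ?_ (Set.union_subset (hφ.2.trans hVU) (hψ.2.trans hWU))
      exact tsupport_add (⇑φ) (⇑ψ)
  have hnn : 0 ≤ Λ φ := hΛ.pos _ fun x => (hφ.1 x).1
  have hnn' : 0 ≤ Λ ψ := hΛ.pos _ fun x => (hψ.1 x).1
  calc ENNReal.ofReal (Λ φ) + ENNReal.ofReal (Λ ψ)
      = ENNReal.ofReal (Λ (φ + ψ)) := by rw [hΛ.add, ENNReal.ofReal_add hnn hnn']
    _ ≤ lam Λ U := test_le_lam htest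

lemma OM_isMetric (hΛ : PosLin Λ) : (OM hΛ).IsMetric := by
  intro A B hsep
  refine le_antisymm ?_ ?_
  · exact measure_union_le A B
  · -- superadditivity
    obtain ⟨r, hr0, hr⟩ := hsep
    set r' : ℝ≥0∞ := min r 1 with hr'
    have hr'0 : r' ≠ 0 := by simp [hr', hr0, min_eq_iff]
    have hr'r : r' ≤ r := min_le_left _ _
    set A' : Set X := {x | EMetric.infEdist x A < r' / 2} with hA'
    set B' : Set X := {x | EMetric.infEdist x B < r' / 2} with hB'
    have hA'open : IsOpen A' := isOpen_lt EMetric.continuous_infEdist continuous_const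
    have hB'open : IsOpen B' := isOpen_lt EMetric.continuous_infEdist continuous_const
    have h2pos : (0:ℝ≥0∞) < r' / 2 := ENNReal.div_pos hr'0 (by norm_num)
    have hAA' : A ⊆ A' := fun x hx => by
      simp only [hA', Set.mem_setOf_eq, EMetric.infEdist, EMetric.infEdist_zero_of_mem hx]; exact h2pos
    have hBB' : B ⊆ B' := fun x hx => by
      simp only [hB', Set.mem_setOf_eq, EMetric.infEdist, EMetric.infEdist_zero_of_mem hx]; exact h2pos
    have hdisj : Disjoint A' B' := by
      rw [Set.disjoint_left]
      intro x hxA hxB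
      obtain ⟨a, ha, hda⟩ := EMetric.infEdist_lt_iff.mp hxA
      obtain ⟨b, hb, hdb⟩ := EMetric.infEdist_lt_iff.mp hxB
      have : edist a b < r' := by
        calc edist a b ≤ edist a x + edist x b := edist_triangle _ _ _
          _ = edist x a + edist x b := by rw [edist_comm a x]
          _ < r' / 2 + r' / 2 := ENNReal.add_lt_add hda hdb
          _ = r' := ENNReal.add_halves r'
      exact absurd (hr a ha b hb) (not_le.mpr (this.trans_le hr'r))
    rw [OM, OuterMeasure.ofFunction_apply]
    refine le_iInf₂ fun C hC => ?_
    by_cases hop : ∀ n, IsOpen (C n)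
    · have hcovA : A ⊆ ⋃ n, (C n ∩ A') := by
        intro x hx
        obtain ⟨n, hn⟩ := Set.mem_iUnion.mp (hC (Set.mem_union_left _ hx))
        exact Set.mem_iUnion.mpr ⟨n, hn, hAA' hx⟩
      have hcovB : B ⊆ ⋃ n, (C n ∩ B') := by
        intro x hx
        obtain ⟨n, hn⟩ := Set.mem_iUnion.mp (hC (Set.mem_union_right _ hx))
        exact Set.mem_iUnion.mpr ⟨n, hn, hBB' hx⟩
      have hOMA : (OM hΛ) A ≤ ∑' n, lam Λ (C n ∩ A') := by
        calc (OM hΛ) A ≤ ∑' n, (OM hΛ) (C n ∩ A') :=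
              ((OM hΛ).mono hcovA).trans (measure_iUnion_le _)
          _ ≤ ∑' n, lam Λ (C n ∩ A') := ENNReal.tsum_le_tsum fun n =>
              (OuterMeasure.ofFunction_le _).trans_eq (m0_open ((hop n).inter hA'open))
      have hOMB : (OM hΛ) B ≤ ∑' n, lam Λ (C n ∩ B') := by
        calc (OM hΛ) B ≤ ∑' n, (OM hΛ) (C n ∩ B') :=
              ((OM hΛ).mono hcovB).trans (measure_iUnion_le _)
          _ ≤ ∑' n, lam Λ (C n ∩ B') := ENNReal.tsum_le_tsum fun n =>
              (OuterMeasure.ofFunction_le _).trans_eq (m0_open ((hop n).inter hB'open))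
      calc (OM hΛ) A + (OM hΛ) B ≤ (∑' n, lam Λ (C n ∩ A')) + ∑' n, lam Λ (C n ∩ B') :=
            add_le_add hOMA hOMB
        _ = ∑' n, (lam Λ (C n ∩ A') + lam Λ (C n ∩ B')) := (ENNReal.tsum_add).symm
        _ ≤ ∑' n, lam Λ (C n) := ENNReal.tsum_le_tsum fun n =>
            lam_add_lam_le hΛ Set.inter_subset_left Set.inter_subset_left
              (hdisj.mono Set.inter_subset_right Set.inter_subset_right)
        _ = ∑' n, m0 Λ (C n) := tsum_congr fun n => (m0_open (hop n)).symm
    · push_neg at hop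
      obtain ⟨n, hn⟩ := hop
      calc (OM hΛ) A + (OM hΛ) B ≤ ∞ := le_top
        _ = m0 Λ (C n) := (m0_not_open hn).symm
        _ ≤ ∑' n, m0 Λ (C n) := ENNReal.le_tsum n

end Riesz4

section Riesz5
variable {X : Type*} [MetricSpace X] [CompactSpace X]
  [MeasurableSpace X] [BorelSpace X] {Λ : C(X,ℝ) → ℝ}

lemma OM_caratheodory (hΛ : PosLin Λ) :
    (inferInstance : MeasurableSpace X) ≤ (OM hΛ).caratheodory := by
  rw [BorelSpace.measurable_eq (α := X)]
  exact (OM_isMetric hΛ).borel_le_caratheodory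

/-- The measure representing `Λ`. -/
noncomputable def rieszMeasure (hΛ : PosLin Λ) : Measure X :=
  (OM hΛ).toMeasure (OM_caratheodory hΛ)

lemma rieszMeasure_open (hΛ : PosLin Λ) {U : Set X} (hU : IsOpen U) :
    rieszMeasure hΛ U = lam Λ U := by
  rw [rieszMeasure, MeasureTheory.toMeasure_apply _ _ hU.measurableSet, OM_open hΛ hU]

lemma lam_univ (hΛ : PosLin Λ) : lam Λ (Set.univ : Set X) = ENNReal.ofReal (Λ 1) := by
  refine le_antisymm (lam_le fun φ hφ => ?_) ?_
  · exact ENNReal.ofReal_le_ofReal (hΛ.mono fun x => by simpa using (hφ.1 x).2)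
  · exact test_le_lam ⟨fun x => by simp, Set.subset_univ _⟩

lemma rieszMeasure_univ (hΛ : PosLin Λ) :
    rieszMeasure hΛ Set.univ = ENNReal.ofReal (Λ 1) := by
  rw [rieszMeasure_open hΛ isOpen_univ, lam_univ hΛ]

instance (hΛ : PosLin Λ) : IsFiniteMeasure (rieszMeasure hΛ) :=
  ⟨by rw [rieszMeasure_univ hΛ]; exact ENNReal.ofReal_lt_top⟩

end Riesz5

lemma sum_clamp (N : ℕ) {y : ℝ} (h0 : 0 ≤ y) (hN : y ≤ N) :
    ∑ i ∈ Finset.range N, min (max (y - i) 0) 1 = y := by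
  induction N with
  | zero => simp at hN; simp [le_antisymm hN h0]
  | succ n ih =>
    rw [Finset.sum_range_succ]
    rcases le_or_gt y n with h | h
    · rw [ih h]
      have : y - n ≤ 0 := by linarith
      rw [max_eq_right this, min_eq_left zero_le_one, add_zero]
    · have hterm : min (max (y - n) 0) 1 = y - n := by
        have h1 : (0:ℝ) ≤ y - n := by linarith
        have h2 : y - n ≤ 1 := by
          push_cast at hN ⊢
          linarith
        rw [max_eq_left h1, min_eq_left h2]
      have hothers : ∀ i ∈ Finset.range n, min (max (y - i) 0) 1 = 1 := by
        intro i hi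
        have hi' : (i:ℝ) ≤ (n:ℝ) - 1 := by
          have := Finset.mem_range.mp hi
          have : (i:ℝ) + 1 ≤ n := by exact_mod_cast this
          linarith
        have h1 : (1:ℝ) ≤ y - i := by linarith
        rw [max_eq_left (by linarith), min_eq_right h1]
      rw [Finset.sum_congr rfl hothers, hterm, Finset.sum_const, Finset.card_range]
      simp only [nsmul_eq_mul, mul_one]
      ring

section Riesz6
variable {X : Type*} [MetricSpace X] [CompactSpace X]
  [MeasurableSpace X] [BorelSpace X] {Λ : C(X,ℝ) → ℝ}

lemma le_integral (hΛ : PosLin Λ) (f : C(X,ℝ)) (hf : ∀ x, 0 ≤ f x) :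
    Λ f ≤ ∫ x, f x ∂(rieszMeasure hΛ) := by
  set μ := rieszMeasure hΛ with hμ
  set C : ℝ := (μ Set.univ).toReal with hC
  have hC0 : 0 ≤ C := ENNReal.toReal_nonneg
  set M : ℝ := ‖f‖ + 1 with hMdef
  have hM : 0 < M := by positivity
  have hfM : ∀ x, f x ≤ M := fun x =>
    ((le_abs_self _).trans ((f.norm_coe_le_norm x))).trans (by simp [hMdef])
  have hint : ∀ g : C(X,ℝ), Integrable (fun x => g x) μ := fun g =>
    g.continuous.integrable_of_hasCompactSupport (HasCompactSupport.of_compactSpace g)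
  have key : ∀ N : ℕ, Λ f - ∫ x, f x ∂μ ≤ 2*C*M / (N+2) := by
    intro N
    obtain ⟨K, hKdef⟩ : ∃ K : ℕ, K = N + 2 := ⟨N + 2, rfl⟩
    have hKR : (0:ℝ) < K := by rw [hKdef]; positivity
    have hKM : (0:ℝ) < (K:ℝ)/M := div_pos hKR hM
    -- the slice functions
    set φ : ℕ → C(X,ℝ) := fun i =>
      ⟨fun x => min (max ((K/M) * f x - i) 0) 1,
        (((continuous_const.mul f.continuous).sub continuous_const).max
          continuous_const).min continuous_const⟩ with hφdef
    have hφ01 : ∀ i x, φ i x ∈ Set.Icc (0:ℝ) 1 := fun i x =>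
      ⟨le_min (le_max_right _ _) zero_le_one, min_le_right _ _⟩
    have hφnn : ∀ i x, 0 ≤ φ i x := fun i x => (hφ01 i x).1
    -- representation
    have hrepr : ((K:ℝ)/M) • f = ∑ i ∈ Finset.range K, φ i := by
      ext x
      rw [ContinuousMap.coe_sum]
      simp only [ContinuousMap.smul_apply, smul_eq_mul, Finset.sum_apply]
      refine (sum_clamp K (mul_nonneg hKM.le (hf x)) ?_).symm
      calc (K:ℝ)/M * f x ≤ (K:ℝ)/M * M :=
            mul_le_mul_of_nonneg_left (hfM x) hKM.le
        _ = K := by field_simp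
    have hsum : ((K:ℝ)/M) * Λ f = ∑ i ∈ Finset.range K, Λ (φ i) := by
      rw [← hΛ.smul, hrepr, hΛ.map_sum]
    -- open sets
    set V : ℕ → Set X := fun i => {x | (i:ℝ) < (K/M) * f x + 1} with hVdef
    have hVopen : ∀ i, IsOpen (V i) :=
      fun i => isOpen_lt continuous_const ((continuous_const.mul f.continuous).add continuous_const)
    have hVtest : ∀ i, IsTest (φ i) (V i) := by
      intro i
      refine ⟨hφ01 i, ?_⟩
      have hsupp : Function.support (φ i) ⊆ {x | (i:ℝ) ≤ (K/M) * f x} := by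
        intro x hx
        simp only [Function.mem_support] at hx
        simp only [Set.mem_setOf_eq]
        by_contra hle
        push_neg at hle
        have : max ((K/M) * f x - i) 0 = 0 := max_eq_right (by linarith)
        exact hx (by simp [hφdef, this])
      have hclosed : IsClosed {x | (i:ℝ) ≤ (K/M) * f x} :=
        isClosed_le continuous_const (continuous_const.mul f.continuous)
      refine (closure_minimal hsupp hclosed).trans ?_
      intro x hx
      simp only [hVdef, Set.mem_setOf_eq] at hx ⊢
      linarith
    have hΛφ : ∀ i, Λ (φ i) ≤ (μ (V i)).toReal := by
      intro i
      have h1 : ENNReal.ofReal (Λ (φ i)) ≤ μ (V i) := by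
        rw [hμ, rieszMeasure_open hΛ (hVopen i)]
        exact test_le_lam (hVtest i)
      have h2 := ENNReal.toReal_mono (measure_ne_top μ _) h1
      rwa [ENNReal.toReal_ofReal (hΛ.pos _ (hφnn i))] at h2
    have hW : ∀ i, (μ (V (i+2))).toReal ≤ ∫ x, φ i x ∂μ := by
      intro i
      have hmeas : MeasurableSet (V (i+2)) := (hVopen (i+2)).measurableSet
      have hind : ∀ x, (V (i+2)).indicator (fun _ => (1:ℝ)) x ≤ φ i x := by
        intro x
        rcases Set.indicator_eq_zero_or_self (V (i+2)) (fun _ => (1:ℝ)) x with h | h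
        · rw [h]; exact hφnn i x
        · rw [h]
          have hx : x ∈ V (i+2) := by
            by_contra hxn
            rw [Set.indicator_of_notMem hxn] at h
            norm_num at h
          have hx' : (i:ℝ) + 1 < (K:ℝ)/M * f x := by
            simp only [hVdef, Set.mem_setOf_eq] at hx
            have hx2 : ((i:ℝ) + 2) < (K:ℝ)/M * f x + 1 := by exact_mod_cast hx
            linarith
          have : min (max ((K/M) * f x - i) 0) 1 = 1 := by
            rw [max_eq_left (by linarith), min_eq_right (by linarith)]
          simp [hφdef, this]
      calc (μ (V (i+2))).toReal
          = ∫ x, (V (i+2)).indicator (fun _ => (1:ℝ)) x ∂μ := by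
            rw [integral_indicator_const _ hmeas]; simp; rfl
        _ ≤ ∫ x, φ i x ∂μ :=
            integral_mono ((integrable_const (1:ℝ)).indicator hmeas) (hint (φ i)) hind
    have hVC : ∀ i, (μ (V i)).toReal ≤ C :=
      fun i => ENNReal.toReal_mono (measure_ne_top μ _)
        (measure_mono (Set.subset_univ _))
    have hsplit : ∑ i ∈ Finset.range K, (μ (V i)).toReal
        = (∑ i ∈ Finset.range N, (μ (V (i+2))).toReal)
          + (μ (V 1)).toReal + (μ (V 0)).toReal := by
      rw [hKdef]
      rw [Finset.sum_range_succ' (fun i => (μ (V i)).toReal) (N+1)]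
      rw [Finset.sum_range_succ' (fun i => (μ (V (i+1))).toReal) N]
    have hintsum : ∑ i ∈ Finset.range N, ∫ x, φ i x ∂μ
        ≤ ((K:ℝ)/M) * ∫ x, f x ∂μ := by
      have h1 : ∑ i ∈ Finset.range N, ∫ x, φ i x ∂μ
          ≤ ∑ i ∈ Finset.range K, ∫ x, φ i x ∂μ := by
        refine Finset.sum_le_sum_of_subset_of_nonneg
          (Finset.range_subset_range.mpr (by omega)) ?_
        intro i _ _
        exact integral_nonneg (hφnn i)
      have h2 : ∑ i ∈ Finset.range K, ∫ x, φ i x ∂μ = ((K:ℝ)/M) * ∫ x, f x ∂μ := by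
        calc ∑ i ∈ Finset.range K, ∫ x, φ i x ∂μ
            = ∫ x, (∑ i ∈ Finset.range K, φ i x) ∂μ :=
              (integral_finset_sum _ (fun i _ => hint (φ i))).symm
          _ = ∫ x, ((K:ℝ)/M) * f x ∂μ := by
              refine integral_congr_ae (Filter.Eventually.of_forall fun x => ?_)
              have hx := congrArg (fun g : C(X,ℝ) => g x) hrepr
              simpa [ContinuousMap.coe_sum, Finset.sum_apply] using hx.symm
          _ = ((K:ℝ)/M) * ∫ x, f x ∂μ := integral_const_mul _ _
      rw [← h2]; exact h1
    have main : ((K:ℝ)/M) * Λ f ≤ 2*C + ((K:ℝ)/M) * ∫ x, f x ∂μ := by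
      calc ((K:ℝ)/M) * Λ f = ∑ i ∈ Finset.range K, Λ (φ i) := hsum
        _ ≤ ∑ i ∈ Finset.range K, (μ (V i)).toReal :=
            Finset.sum_le_sum (fun i _ => hΛφ i)
        _ = (∑ i ∈ Finset.range N, (μ (V (i+2))).toReal)
              + (μ (V 1)).toReal + (μ (V 0)).toReal := hsplit
        _ ≤ (∑ i ∈ Finset.range N, ∫ x, φ i x ∂μ) + C + C := by
            gcongr
            exacts [hW _, hVC _, hVC _]
        _ ≤ ((K:ℝ)/M) * (∫ x, f x ∂μ) + C + C := by linarith [hintsum]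
        _ = 2*C + ((K:ℝ)/M) * ∫ x, f x ∂μ := by ring
    have hKN : ((K:ℝ)) = (N:ℝ) + 2 := by rw [hKdef]; push_cast; ring
    have hpos : (0:ℝ) < (N:ℝ) + 2 := by positivity
    rw [le_div_iff₀ hpos]
    have e2 : (K:ℝ)/M * Λ f - (K:ℝ)/M * (∫ x, f x ∂μ) ≤ 2*C := by linarith
    calc (Λ f - ∫ x, f x ∂μ) * ((N:ℝ)+2)
        = ((K:ℝ)/M * Λ f - (K:ℝ)/M * ∫ x, f x ∂μ) * M := by
          rw [← hKN]
          field_simp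
      _ ≤ 2*C*M := mul_le_mul_of_nonneg_right e2 hM.le
  -- take the limit
  have htend : Filter.Tendsto (fun N : ℕ => 2*C*M / (N+2)) atTop (𝓝 0) := by
    have h1 : Filter.Tendsto (fun n : ℕ => 2*C*M / (n:ℝ)) atTop (𝓝 0) :=
      tendsto_const_div_atTop_nhds_zero_nat _
    have h2 : Filter.Tendsto (fun N : ℕ => N + 2) atTop atTop :=
      tendsto_add_atTop_nat 2
    exact (h1.comp h2).congr fun n => by
      simp only [Function.comp_apply]
      push_cast
      ring
  have hle : Λ f - ∫ x, f x ∂μ ≤ 0 := ge_of_tendsto' htend key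
  linarith

end Riesz6

section Riesz7
variable {X : Type*} [MetricSpace X] [CompactSpace X]
  [MeasurableSpace X] [BorelSpace X] {Λ : C(X,ℝ) → ℝ}

lemma riesz_rep (hΛ : PosLin Λ) (f : C(X,ℝ)) :
    ∫ x, f x ∂(rieszMeasure hΛ) = Λ f := by
  set μ := rieszMeasure hΛ with hμ
  have hμuniv : (μ Set.univ).toReal = Λ 1 := by
    rw [hμ, rieszMeasure_univ hΛ, ENNReal.toReal_ofReal (hΛ.pos 1 (by simp))]
  have h1 : ∀ g : C(X,ℝ), Λ g ≤ ∫ x, g x ∂μ := by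
    intro g
    have hpos : ∀ x, 0 ≤ (g + ‖g‖ • (1:C(X,ℝ))) x := by
      intro x
      simp only [ContinuousMap.add_apply, ContinuousMap.smul_apply, ContinuousMap.one_apply,
        smul_eq_mul, mul_one]
      have hb := g.norm_coe_le_norm x
      rw [Real.norm_eq_abs] at hb
      have := (abs_le.mp hb).1
      linarith
    have hint : ∀ h : C(X,ℝ), Integrable (fun x => h x) μ := fun h =>
      h.continuous.integrable_of_hasCompactSupport (HasCompactSupport.of_compactSpace h)
    have key := le_integral hΛ (g + ‖g‖ • (1:C(X,ℝ))) hpos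
    have hΛg : Λ (g + ‖g‖ • (1:C(X,ℝ))) = Λ g + ‖g‖ * Λ 1 := by
      rw [hΛ.add, hΛ.smul]
    have hIg : ∫ x, (g + ‖g‖ • (1:C(X,ℝ))) x ∂μ = (∫ x, g x ∂μ) + ‖g‖ * Λ 1 := by
      have : (fun x => (g + ‖g‖ • (1:C(X,ℝ))) x) = fun x => g x + ‖g‖ := by
        ext x; simp
      rw [this, integral_add (hint g) (integrable_const _), integral_const, smul_eq_mul,
        measureReal_def, hμuniv, mul_comm]
    rw [hΛg, hIg] at key
    linarith
  have h2 := h1 (-f)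
  have h3 : Λ (-f) = - Λ f := by
    have : (-1:ℝ) • f = -f := by ext x; simp
    rw [← this, hΛ.smul]; ring
  have h4 : ∫ x, (-f) x ∂μ = - ∫ x, f x ∂μ := by
    simp only [ContinuousMap.neg_apply]
    exact integral_neg _
  rw [h3, h4] at h2
  have := h1 f
  linarith

end Riesz7

/-- The abstract "total first variation": `Φ(μ) = sup_{f ∈ F} ∫ f dμ ∈ [0, ∞]`,
for a family `F` of continuous functions closed under negation (so the sup is
nonnegative, and taking `ENNReal.ofReal` of each integral does not change it). -/
noncomputable def Phi {X : Type*} [TopologicalSpace X] [MeasurableSpace X]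
    (F : Set C(X, ℝ)) (μ : Measure X) : ℝ≥0∞ :=
  ⨆ f ∈ F, ENNReal.ofReal (∫ x, f x ∂μ)

theorem stmt_0 {X : Type*} [MetricSpace X] [CompactSpace X]
    [MeasurableSpace X] [BorelSpace X]
    (F : Set C(X, ℝ)) (hF : F.Nonempty) (hFneg : ∀ f ∈ F, -f ∈ F)
    (hzero : ∀ μ : Measure X, IsFiniteMeasure μ →
      (∀ f ∈ F, ∫ x, f x ∂μ = 0) → μ = 0) :
    ∃ c : ℝ≥0, ∀ μ : Measure X, IsFiniteMeasure μ →
      μ Set.univ ≤ (c : ℝ≥0∞) * Phi F μ := by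
  by_contra hcon
  push_neg at hcon
  have hcon' : ∀ n : ℕ, ∃ μ : Measure X, IsFiniteMeasure μ ∧
      ((n:ℝ≥0∞) + 1) * Phi F μ < μ Set.univ := by
    intro n
    obtain ⟨μ, hfin, hlt⟩ := hcon ((n:ℝ≥0) + 1)
    refine ⟨μ, hfin, ?_⟩
    have hc : ((((n:ℝ≥0) + 1) : ℝ≥0) : ℝ≥0∞) = (n:ℝ≥0∞) + 1 := by push_cast; ring
    rwa [hc] at hlt
  choose μs hfin hlt using hcon'
  have h0 : ∀ n, μs n Set.univ ≠ 0 := by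
    intro n h
    have := hlt n
    rw [h] at this
    exact absurd this (by simp)
  have htop : ∀ n, μs n Set.univ ≠ ∞ := fun n => by
    haveI := hfin n; exact measure_ne_top _ _
  set ν : ℕ → Measure X := fun n => (μs n Set.univ)⁻¹ • μs n with hν
  have hprob : ∀ n, IsProbabilityMeasure (ν n) := by
    intro n
    constructor
    rw [hν]
    simp only [Measure.smul_apply, smul_eq_mul]
    exact ENNReal.inv_mul_cancel (h0 n) (htop n)
  have hintν : ∀ (n : ℕ) (g : C(X,ℝ)), Integrable (fun x => g x) (ν n) := by
    intro n g
    haveI := hprob n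
    exact g.continuous.integrable_of_hasCompactSupport (HasCompactSupport.of_compactSpace g)
  -- bound on integrals of members of F
  have hbound : ∀ f ∈ F, ∀ n : ℕ, ∫ x, f x ∂(ν n) ≤ 1 / ((n:ℝ) + 1) := by
    intro f hf n
    have hIf : ∫ x, f x ∂(ν n) = ((μs n Set.univ)⁻¹).toReal * ∫ x, f x ∂(μs n) := by
      rw [hν]
      simp [integral_smul_measure, smul_eq_mul]
    rcases le_or_gt (∫ x, f x ∂(μs n)) 0 with hneg | hpos
    · rw [hIf]
      have : ((μs n Set.univ)⁻¹).toReal * ∫ x, f x ∂(μs n) ≤ 0 :=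
        mul_nonpos_of_nonneg_of_nonpos ENNReal.toReal_nonneg hneg
      have h1 : (0:ℝ) ≤ 1 / ((n:ℝ)+1) := by positivity
      linarith
    · have hPhile : ENNReal.ofReal (∫ x, f x ∂(μs n)) ≤ Phi F (μs n) :=
        le_iSup₂ (f := fun (g : C(X,ℝ)) (_ : g ∈ F) => ENNReal.ofReal (∫ x, g x ∂(μs n))) f hf
      have hPhi : Phi F (μs n) ≤ μs n Set.univ / ((n:ℝ≥0∞) + 1) := by
        rw [ENNReal.le_div_iff_mul_le (Or.inl (by simp)) (Or.inl (by simp))]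
        exact (hlt n).le.trans_eq' (mul_comm _ _).symm
      have hofReal : ENNReal.ofReal (∫ x, f x ∂(ν n)) ≤ ((n:ℝ≥0∞) + 1)⁻¹ := by
        rw [hIf, ENNReal.ofReal_mul ENNReal.toReal_nonneg,
          ENNReal.ofReal_toReal (ENNReal.inv_ne_top.mpr (h0 n))]
        calc (μs n Set.univ)⁻¹ * ENNReal.ofReal (∫ x, f x ∂(μs n))
            ≤ (μs n Set.univ)⁻¹ * (μs n Set.univ / ((n:ℝ≥0∞) + 1)) := by
              exact mul_le_mul_right (hPhile.trans hPhi) _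
          _ = ((n:ℝ≥0∞) + 1)⁻¹ := by
              rw [ENNReal.div_eq_inv_mul, ← mul_assoc, mul_comm ((μs n Set.univ)⁻¹),
                mul_assoc, ENNReal.inv_mul_cancel (h0 n) (htop n), mul_one]
      have h2 := ENNReal.toReal_mono (by simp : ((n:ℝ≥0∞) + 1)⁻¹ ≠ ∞) hofReal
      have hnn : 0 ≤ ∫ x, f x ∂(ν n) := by
        rw [hIf]
        exact mul_nonneg ENNReal.toReal_nonneg hpos.le
      rw [ENNReal.toReal_ofReal hnn] at h2
      have h3 : ((n:ℝ≥0∞) + 1)⁻¹.toReal = 1 / ((n:ℝ)+1) := by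
        rw [ENNReal.toReal_inv, one_div, ENNReal.toReal_add (by simp) (by simp)]
        simp
      rw [h3] at h2
      exact h2
  have htend0 : ∀ f ∈ F, Tendsto (fun n => ∫ x, f x ∂(ν n)) atTop (𝓝 0) := by
    intro f hf
    refine squeeze_zero_norm (fun n => ?_) tendsto_one_div_add_atTop_nhds_zero_nat
    rw [Real.norm_eq_abs, abs_le]
    constructor
    · have := hbound (-f) (hFneg f hf) n
      have hneg : ∫ x, (-f) x ∂(ν n) = - ∫ x, f x ∂(ν n) := by
        simp only [ContinuousMap.neg_apply]
        exact integral_neg _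
      rw [hneg] at this
      linarith
    · exact hbound f hf n
  -- ultrafilter limit
  set U : Ultrafilter ℕ := Ultrafilter.of atTop with hU
  have hUle : (U : Filter ℕ) ≤ atTop := Ultrafilter.of_le _
  have hex : ∀ f : C(X,ℝ), ∃ a : ℝ, Tendsto (fun n => ∫ x, f x ∂(ν n)) ↑U (𝓝 a) := by
    intro f
    set g : ℕ → ℝ := fun n => ∫ x, f x ∂(ν n) with hg
    have hmem : ∀ n, g n ∈ Set.Icc (-‖f‖) ‖f‖ := by
      intro n
      haveI := hprob n
      have := norm_integral_le_of_norm_le_const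
        (C := ‖f‖) (μ := ν n) (f := fun x => f x)
        (Filter.Eventually.of_forall fun x => f.norm_coe_le_norm x)
      rw [Real.norm_eq_abs] at this
      have h1 : |g n| ≤ ‖f‖ := by
        refine this.trans ?_
        simp [measure_univ]
      exact abs_le.mp h1
    have hle : ↑(U.map g) ≤ Filter.principal (Set.Icc (-‖f‖) ‖f‖) := by
      rw [Ultrafilter.coe_map, le_principal_iff, mem_map]
      exact Filter.univ_mem' hmem
    obtain ⟨a, -, ha⟩ := isCompact_Icc.ultrafilter_le_nhds (U.map g) hle
    exact ⟨a, by rwa [Ultrafilter.coe_map] at ha⟩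
  choose Λ hΛt using hex
  have hPos : PosLin Λ := by
    constructor
    · intro f g
      refine tendsto_nhds_unique (hΛt (f + g)) ?_
      refine (((hΛt f).add (hΛt g)).congr fun n => ?_)
      rw [← integral_add (hintν n f) (hintν n g)]
      rfl
    · intro c f
      refine tendsto_nhds_unique (hΛt (c • f)) ?_
      refine (((hΛt f).const_mul c).congr fun n => ?_)
      rw [← smul_eq_mul, ← integral_smul]
      rfl
    · intro f hf
      exact ge_of_tendsto (hΛt f)
        (Filter.Eventually.of_forall fun n => integral_nonneg hf)
  have hΛ1 : Λ 1 = 1 := by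
    refine tendsto_nhds_unique (hΛt 1) ?_
    have : (fun n => ∫ x, (1:C(X,ℝ)) x ∂(ν n)) = fun _ => (1:ℝ) := by
      ext n
      haveI := hprob n
      simp
    rw [this]
    exact tendsto_const_nhds
  have hΛF : ∀ f ∈ F, Λ f = 0 := fun f hf =>
    tendsto_nhds_unique (hΛt f) ((htend0 f hf).mono_left hUle)
  -- the represented measure
  set muInf := rieszMeasure hPos with hmuInf
  have hz := hzero muInf inferInstance (fun f hf => by
    rw [hmuInf, riesz_rep hPos f, hΛF f hf])
  have huniv : muInf Set.univ = 1 := by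
    rw [hmuInf, rieszMeasure_univ hPos, hΛ1]
    simp
  rw [hz] at huniv
  simp at huniv
end

section
/- Let X be a compact metric space and let F be a nonempty family of continuous real-valued functions on X such that -f ∈ F whenever f ∈ F. For a finite Borel measure μ on X define Φ(μ) = sup_{f ∈ F} ∫ f dμ ∈ [0, ∞]. For each nonempty compact subset K of X define c_K = sup { μ(X) : μ a finite Borel measure on X whose support is contained in K and with Φ(μ) ≤ 1 } ∈ [0, ∞]. Then K ↦ c_K is upper semicontinuous with respect to the Hausdorff distance: if nonempty compact sets K_i converge to a nonempty compact set K in the Hausdorff metric, then limsup_i c_{K_i} ≤ c_K. -/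
open MeasureTheory Filter
open scoped ENNReal NNReal Topology

/-- `c_K`: the best isoperimetric constant among finite Borel measures supported
in the compact set `K` (the support condition is expressed as `μ Kᶜ = 0`). -/
noncomputable def bestConst {X : Type*} [TopologicalSpace X] [MeasurableSpace X]
    (F : Set C(X, ℝ)) (K : Set X) : ℝ≥0∞ :=
  sSup {m : ℝ≥0∞ | ∃ μ : Measure X, IsFiniteMeasure μ ∧ μ Kᶜ = 0 ∧
    Phi F μ ≤ 1 ∧ μ Set.univ = m}

set_option linter.unusedSectionVars false

namespace Stmt5Aux

variable {X : Type*} [MetricSpace X] [CompactSpace X]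

/-- Admissible test functions for a set `U`. -/
def Adm (U : Set X) : Set C(X, ℝ) :=
  {g | tsupport g ⊆ U ∧ ∀ x, 0 ≤ g x ∧ g x ≤ 1}

/-- The "open-set content" associated to a positive functional. -/
noncomputable def rho (L : C(X, ℝ) → ℝ) (U : Set X) : ℝ≥0∞ :=
  ⨆ g ∈ Adm U, ENNReal.ofReal (L g)

lemma zero_mem_Adm (U : Set X) : (0 : C(X, ℝ)) ∈ Adm U := by
  refine ⟨?_, fun x => by simp⟩
  have h : tsupport (⇑(0 : C(X, ℝ))) = ∅ := by
    have : (⇑(0 : C(X, ℝ)) : X → ℝ) = 0 := rfl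
    rw [this]; exact tsupport_eq_empty_iff.mpr rfl
  rw [h]; exact Set.empty_subset U

lemma L_mono (L : C(X, ℝ) → ℝ) (hadd : ∀ f g : C(X, ℝ), L (f + g) = L f + L g)
    (hpos : ∀ f : C(X, ℝ), (∀ x, 0 ≤ f x) → 0 ≤ L f)
    {f g : C(X, ℝ)} (h : ∀ x, f x ≤ g x) : L f ≤ L g := by
  have h0 : 0 ≤ L (g - f) := hpos _ (fun x => by simpa using sub_nonneg.2 (h x))
  have : L g = L f + L (g - f) := by
    rw [← hadd]; congr 1; abel
  linarith

lemma L_sum (L : C(X, ℝ) → ℝ) (hadd : ∀ f g : C(X, ℝ), L (f + g) = L f + L g)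
    {ι : Type*} (s : Finset ι) (G : ι → C(X, ℝ)) :
    L (∑ i ∈ s, G i) = ∑ i ∈ s, L (G i) := by
  classical
  have h0 : L 0 = 0 := by have := hadd 0 0; simpa using this
  induction s using Finset.induction with
  | empty => simpa using h0
  | insert a s hx ih => rw [Finset.sum_insert hx, Finset.sum_insert hx, hadd, ih]

lemma rho_mono (L : C(X, ℝ) → ℝ) {U V : Set X} (h : U ⊆ V) : rho L U ≤ rho L V :=
  iSup₂_le fun g hg => le_iSup₂ (f := fun g _ => ENNReal.ofReal (L g)) g ⟨hg.1.trans h, hg.2⟩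

lemma ofReal_L_le_rho (L : C(X, ℝ) → ℝ) {U : Set X} {g : C(X, ℝ)} (hg : g ∈ Adm U) :
    ENNReal.ofReal (L g) ≤ rho L U :=
  le_iSup₂ (f := fun g _ => ENNReal.ofReal (L g)) g hg

lemma rho_le_one (L : C(X, ℝ) → ℝ) (hadd : ∀ f g : C(X, ℝ), L (f + g) = L f + L g)
    (hpos : ∀ f : C(X, ℝ), (∀ x, 0 ≤ f x) → 0 ≤ L f) (U : Set X) :
    rho L U ≤ ENNReal.ofReal (L 1) :=
  iSup₂_le fun g hg => ENNReal.ofReal_le_ofReal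
    (L_mono L hadd hpos (fun x => by simpa using (hg.2 x).2))

end Stmt5Aux

namespace Stmt5Aux
variable {X : Type*} [MetricSpace X] [CompactSpace X]

/-- Key splitting lemma (substitute for partition of unity). -/
lemma ofReal_L_le_tsum_rho (L : C(X, ℝ) → ℝ)
    (hadd : ∀ f g : C(X, ℝ), L (f + g) = L f + L g)
    (hpos : ∀ f : C(X, ℝ), (∀ x, 0 ≤ f x) → 0 ≤ L f)
    {U : Set X} {g : C(X, ℝ)} (hg : g ∈ Adm U)
    (V : ℕ → Set X) (hV : ∀ n, IsOpen (V n)) (hUV : U ⊆ ⋃ n, V n) :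
    ENNReal.ofReal (L g) ≤ ∑' n, rho L (V n) := by
  classical
  by_cases huniv : ∃ n, V n = Set.univ
  · obtain ⟨n, hn⟩ := huniv
    refine le_trans (ofReal_L_le_rho L (U := V n) ⟨?_, hg.2⟩) (ENNReal.le_tsum n)
    rw [hn]; exact Set.subset_univ _
  push_neg at huniv
  have hVc : ∀ n, ((V n)ᶜ : Set X).Nonempty := fun n => Set.nonempty_compl.mpr (huniv n)
  set T : Set X := tsupport g with hT
  have hTc : IsCompact T := (isClosed_tsupport _).isCompact
  have hTV : T ⊆ ⋃ n, V n := hg.1.trans hUV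
  obtain ⟨J, hJ⟩ := hTc.elim_finite_subcover V hV hTV
  have hTVJ : T ⊆ ⋃ n : J, V n := fun x hx => by
    obtain ⟨i, hi, hxi⟩ := Set.mem_iUnion₂.mp (hJ hx)
    exact Set.mem_iUnion.mpr ⟨⟨i, hi⟩, hxi⟩
  obtain ⟨δ, hδ, hball⟩ :=
    lebesgue_number_lemma_of_metric hTc (fun n : J => hV n) hTVJ
  -- the bump functions
  set φ : ℕ → C(X, ℝ) := fun n =>
    ⟨fun x => max (Metric.infDist x ((V n)ᶜ) - δ/2) 0,
      (Metric.continuous_infDist_pt _ |>.sub continuous_const).max continuous_const⟩ with hφ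
  have hφ0 : ∀ n x, 0 ≤ φ n x := fun n x => le_max_right _ _
  set ψ : C(X, ℝ) := ∑ n ∈ J, φ n with hψ
  have hψ0 : ∀ x, 0 ≤ ψ x := by
    intro x
    rw [hψ, ContinuousMap.sum_apply]
    exact Finset.sum_nonneg fun n _ => hφ0 n x
  have hψT : ∀ x ∈ T, δ/2 ≤ ψ x := by
    intro x hx
    obtain ⟨n, hn⟩ := hball x hx
    have h1 : δ ≤ Metric.infDist x ((V (n : ℕ))ᶜ) := by
      by_contra hlt
      obtain ⟨y, hy, hyd⟩ := (Metric.infDist_lt_iff (hVc n)).mp (not_le.mp hlt)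
      exact hy (hn (Metric.mem_ball'.mpr hyd))
    have h2 : δ/2 ≤ φ n x := le_max_of_le_left (by linarith)
    rw [hψ, ContinuousMap.sum_apply]
    refine le_trans h2 (Finset.single_le_sum (fun m _ => hφ0 m x) n.2)
  set d : C(X, ℝ) :=
    ⟨fun x => max (ψ x) (δ/4), (map_continuous ψ).max continuous_const⟩ with hd
  have hd0 : ∀ x, 0 < d x := fun x => lt_of_lt_of_le (by linarith) (le_max_right _ _)
  have hψled : ∀ x, ψ x ≤ d x := fun x => le_max_left _ _
  set gn : ℕ → C(X, ℝ) := fun n =>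
    ⟨fun x => g x * φ n x / d x,
      ((map_continuous g).mul (map_continuous (φ n))).div (map_continuous d)
        (fun x => (hd0 x).ne')⟩ with hgn
  have hφle : ∀ n ∈ J, ∀ x, φ n x ≤ ψ x := by
    intro n hn x
    rw [hψ, ContinuousMap.sum_apply]
    exact Finset.single_le_sum (fun m _ => hφ0 m x) hn
  have hsum : ∑ n ∈ J, gn n = g := by
    ext x
    rw [ContinuousMap.sum_apply]
    by_cases hx : g x = 0
    · simp [hgn, hx]
    · have hxT : x ∈ T := subset_closure (by simpa [Function.mem_support] using hx)
      have hdx : d x = ψ x := max_eq_left (le_trans (by linarith) (hψT x hxT))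
      have hψx : ψ x ≠ 0 := ne_of_gt (by have := hψT x hxT; linarith)
      simp only [hgn, ContinuousMap.coe_mk]
      rw [← Finset.sum_div, ← Finset.mul_sum, hdx, ← ContinuousMap.sum_apply]
      rw [mul_div_assoc, div_self hψx, mul_one]
  have hmem : ∀ n ∈ J, gn n ∈ Adm (V n) := by
    intro n hn
    constructor
    · have hsupp : Function.support (gn n) ⊆ {x | δ/2 ≤ Metric.infDist x ((V n)ᶜ)} := by
        intro x hx
        simp only [hgn, Function.mem_support, ContinuousMap.coe_mk] at hx
        have hφx : φ n x ≠ 0 := by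
          intro h; apply hx; simp [h]
        by_contra hcon
        simp only [Set.mem_setOf_eq, not_le] at hcon
        refine hφx ?_
        show (Metric.infDist x ((V n)ᶜ) - δ / 2) ⊔ 0 = 0
        exact max_eq_right (by linarith)
      have hclosed : IsClosed {x | δ/2 ≤ Metric.infDist x ((V n)ᶜ)} :=
        isClosed_le continuous_const (Metric.continuous_infDist_pt _)
      refine (closure_minimal hsupp hclosed).trans ?_
      intro x hx
      simp only [Set.mem_setOf_eq] at hx
      by_contra hxV
      have : Metric.infDist x ((V n)ᶜ) = 0 := Metric.infDist_zero_of_mem hxV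
      rw [this] at hx
      linarith
    · intro x
      have h1 : 0 ≤ g x := (hg.2 x).1
      have h2 : g x ≤ 1 := (hg.2 x).2
      constructor
      · exact div_nonneg (mul_nonneg h1 (hφ0 n x)) (hd0 x).le
      · show g x * φ n x / d x ≤ 1
        rw [div_le_one (hd0 x)]
        calc g x * φ n x ≤ 1 * φ n x := by
              exact mul_le_mul_of_nonneg_right h2 (hφ0 n x)
          _ = φ n x := one_mul _
          _ ≤ ψ x := hφle n hn x
          _ ≤ d x := hψled x
  calc ENNReal.ofReal (L g) = ENNReal.ofReal (∑ n ∈ J, L (gn n)) := by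
        rw [← L_sum L hadd, hsum]
    _ = ∑ n ∈ J, ENNReal.ofReal (L (gn n)) :=
        ENNReal.ofReal_sum_of_nonneg fun n hn => hpos _ (fun x => ((hmem n hn).2 x).1)
    _ ≤ ∑ n ∈ J, rho L (V n) :=
        Finset.sum_le_sum fun n hn => ofReal_L_le_rho L (hmem n hn)
    _ ≤ ∑' n, rho L (V n) := ENNReal.sum_le_tsum J

end Stmt5Aux

namespace Stmt5Aux
variable {X : Type*} [MetricSpace X] [CompactSpace X]

open Classical in
/-- The outer-measure generator: `rho` on open sets, `⊤` elsewhere. -/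
noncomputable def mfn (L : C(X, ℝ) → ℝ) (A : Set X) : ℝ≥0∞ :=
  if IsOpen A then rho L A else ⊤

lemma mfn_empty (L : C(X, ℝ) → ℝ) (hadd : ∀ f g : C(X, ℝ), L (f + g) = L f + L g) :
    mfn L (∅ : Set X) = 0 := by
  have h0 : L 0 = 0 := by have := hadd 0 0; simpa using this
  rw [mfn, if_pos isOpen_empty]
  refine le_antisymm (iSup₂_le fun g hg => ?_) zero_le
  have : g = 0 := by
    ext x
    by_contra hx
    exact absurd (hg.1 (subset_closure (Function.mem_support.mpr hx))) (Set.notMem_empty x)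
  simp [this, h0]

/-- The outer measure. -/
noncomputable def mstar (L : C(X, ℝ) → ℝ)
    (hadd : ∀ f g : C(X, ℝ), L (f + g) = L f + L g) : OuterMeasure X :=
  OuterMeasure.ofFunction (mfn L) (mfn_empty L hadd)

lemma mstar_le_mfn (L : C(X, ℝ) → ℝ) (hadd : ∀ f g : C(X, ℝ), L (f + g) = L f + L g)
    (A : Set X) : mstar L hadd A ≤ mfn L A :=
  OuterMeasure.ofFunction_le _

lemma mstar_open (L : C(X, ℝ) → ℝ)
    (hadd : ∀ f g : C(X, ℝ), L (f + g) = L f + L g)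
    (hpos : ∀ f : C(X, ℝ), (∀ x, 0 ≤ f x) → 0 ≤ L f)
    {U : Set X} (hU : IsOpen U) : mstar L hadd U = rho L U := by
  classical
  refine le_antisymm (by simpa [mfn, if_pos hU] using mstar_le_mfn L hadd U) ?_
  rw [mstar, OuterMeasure.ofFunction_apply]
  refine le_iInf₂ fun V hUV => ?_
  by_cases hVo : ∀ n, IsOpen (V n)
  · refine iSup₂_le fun g hg => ?_
    calc ENNReal.ofReal (L g) ≤ ∑' n, rho L (V n) :=
          ofReal_L_le_tsum_rho L hadd hpos hg V hVo hUV
      _ ≤ ∑' n, mfn L (V n) := ENNReal.tsum_le_tsum fun n => by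
          rw [mfn, if_pos (hVo n)]
  · push_neg at hVo
    obtain ⟨n, hn⟩ := hVo
    have : mfn L (V n) = ⊤ := by rw [mfn, if_neg hn]
    refine le_trans ?_ (ENNReal.le_tsum n)
    rw [this]; exact le_top

lemma mstar_isMetric (L : C(X, ℝ) → ℝ)
    (hadd : ∀ f g : C(X, ℝ), L (f + g) = L f + L g)
    (hpos : ∀ f : C(X, ℝ), (∀ x, 0 ≤ f x) → 0 ≤ L f) :
    (mstar L hadd).IsMetric := by
  classical
  intro s t hst
  refine le_antisymm (measure_union_le (μ := mstar L hadd) s t) ?_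
  obtain ⟨r, hr0, hr⟩ := hst
  -- disjoint open thickenings
  set Ts : Set X := {x | EMetric.infEdist x s < r / 2} with hTs
  set Tt : Set X := {x | EMetric.infEdist x t < r / 2} with hTt
  have hTso : IsOpen Ts := by
    exact isOpen_Iio.preimage (EMetric.continuous_infEdist (s := s))
  have hTto : IsOpen Tt := by
    exact isOpen_Iio.preimage (EMetric.continuous_infEdist (s := t))
  have hsTs : s ⊆ Ts := fun x hx => by
    simp only [hTs, Set.mem_setOf_eq, EMetric.infEdist_zero_of_mem hx]
    exact (EMetric.infEdist_zero_of_mem hx).trans_lt (ENNReal.div_pos hr0 (by norm_num : (2:ℝ≥0∞) ≠ ∞))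
  have htTt : t ⊆ Tt := fun x hx => by
    simp only [hTt, Set.mem_setOf_eq, EMetric.infEdist_zero_of_mem hx]
    exact (EMetric.infEdist_zero_of_mem hx).trans_lt (ENNReal.div_pos hr0 (by norm_num : (2:ℝ≥0∞) ≠ ∞))
  have hdisj : Ts ∩ Tt = ∅ := by
    ext x
    simp only [Set.mem_inter_iff, Set.mem_empty_iff_false, iff_false, not_and]
    intro hxs hxt
    rw [hTs, Set.mem_setOf_eq] at hxs
    rw [hTt, Set.mem_setOf_eq] at hxt
    obtain ⟨y, hy, hye⟩ := EMetric.infEdist_lt_iff.mp hxs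
    obtain ⟨z, hz, hze⟩ := EMetric.infEdist_lt_iff.mp hxt
    have : edist y z < r := by
      calc edist y z ≤ edist y x + edist x z := edist_triangle _ _ _
        _ < r / 2 + r / 2 := by
            exact ENNReal.add_lt_add (by rwa [edist_comm]) hze
        _ = r := ENNReal.add_halves r
    exact absurd (hr y hy z hz) (not_le.mpr this)
  -- superadditivity of rho over disjoint open pieces
  have hsuper : ∀ A : Set X, IsOpen A → rho L (A ∩ Ts) + rho L (A ∩ Tt) ≤ rho L A := by
    intro A _
    refine ENNReal.biSup_add_biSup_le' (p := fun g => g ∈ Adm (A ∩ Ts))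
      (q := fun g => g ∈ Adm (A ∩ Tt)) ⟨0, zero_mem_Adm _⟩ ⟨0, zero_mem_Adm _⟩ ?_
    intro g₁ hg₁ g₂ hg₂
    have hgadm : g₁ + g₂ ∈ Adm A := by
      constructor
      · refine (tsupport_add (f := (g₁ : X → ℝ)) (g := (g₂ : X → ℝ))).trans ?_
        exact Set.union_subset (hg₁.1.trans Set.inter_subset_left)
          (hg₂.1.trans Set.inter_subset_left)
      · intro x
        rcases Set.eq_empty_iff_forall_notMem.mp hdisj x |> fun h => (em (x ∈ Ts)) with hx | hx
        · -- x ∈ Ts : g₂ x = 0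
          have hg₂x : g₂ x = 0 := by
            by_contra h2
            have : x ∈ Tt := hg₂.1 (subset_closure (Function.mem_support.mpr h2))
              |> fun hh => hh.2
            exact Set.eq_empty_iff_forall_notMem.mp hdisj x ⟨hx, this⟩
          simp only [ContinuousMap.add_apply, hg₂x, add_zero]
          exact ⟨(hg₁.2 x).1, (hg₁.2 x).2⟩
        · -- x ∉ Ts : g₁ x = 0
          have hg₁x : g₁ x = 0 := by
            by_contra h1
            exact hx ((hg₁.1 (subset_closure (Function.mem_support.mpr h1))).2)
          simp only [ContinuousMap.add_apply, hg₁x, zero_add]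
          exact ⟨(hg₂.2 x).1, (hg₂.2 x).2⟩
    calc ENNReal.ofReal (L g₁) + ENNReal.ofReal (L g₂)
        = ENNReal.ofReal (L g₁ + L g₂) := by
          rw [ENNReal.ofReal_add (hpos _ fun x => (hg₁.2 x).1) (hpos _ fun x => (hg₂.2 x).1)]
      _ = ENNReal.ofReal (L (g₁ + g₂)) := by rw [hadd]
      _ ≤ rho L A := ofReal_L_le_rho L hgadm
  -- conclude
  rw [mstar, OuterMeasure.ofFunction_apply]
  refine le_iInf₂ fun V hV => ?_
  by_cases hVo : ∀ n, IsOpen (V n)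
  · have hs' : mstar L hadd s ≤ ∑' n, rho L (V n ∩ Ts) := by
      rw [mstar, OuterMeasure.ofFunction_apply]
      refine iInf₂_le_of_le (fun n => V n ∩ Ts) ?_ ?_
      · intro x hx
        obtain ⟨n, hn⟩ := Set.mem_iUnion.mp (hV (Set.mem_union_left t hx))
        exact Set.mem_iUnion.mpr ⟨n, hn, hsTs hx⟩
      · refine ENNReal.tsum_le_tsum fun n => ?_
        rw [mfn, if_pos ((hVo n).inter hTso)]
    have ht' : mstar L hadd t ≤ ∑' n, rho L (V n ∩ Tt) := by
      rw [mstar, OuterMeasure.ofFunction_apply]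
      refine iInf₂_le_of_le (fun n => V n ∩ Tt) ?_ ?_
      · intro x hx
        obtain ⟨n, hn⟩ := Set.mem_iUnion.mp (hV (Set.mem_union_right s hx))
        exact Set.mem_iUnion.mpr ⟨n, hn, htTt hx⟩
      · refine ENNReal.tsum_le_tsum fun n => ?_
        rw [mfn, if_pos ((hVo n).inter hTto)]
    calc mstar L hadd s + mstar L hadd t
        ≤ (∑' n, rho L (V n ∩ Ts)) + ∑' n, rho L (V n ∩ Tt) := add_le_add hs' ht'
      _ = ∑' n, (rho L (V n ∩ Ts) + rho L (V n ∩ Tt)) := (ENNReal.tsum_add).symm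
      _ ≤ ∑' n, rho L (V n) := ENNReal.tsum_le_tsum fun n => hsuper (V n) (hVo n)
      _ ≤ ∑' n, mfn L (V n) := ENNReal.tsum_le_tsum fun n => by rw [mfn, if_pos (hVo n)]
  · push_neg at hVo
    obtain ⟨n, hn⟩ := hVo
    have : mfn L (V n) = ⊤ := by rw [mfn, if_neg hn]
    refine le_trans ?_ (ENNReal.le_tsum n)
    rw [this]; exact le_top

end Stmt5Aux

namespace Stmt5Aux
variable {X : Type*} [MetricSpace X] [CompactSpace X]

/-- The exact staircase identity for clamped level functions. -/
lemma staircase {Δ : ℝ} (hΔ : 0 < Δ) (n : ℕ) :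
    ∀ y : ℝ, 0 ≤ y → y ≤ n * Δ →
      Δ * ∑ j ∈ Finset.range n, min 1 (max 0 ((y - j * Δ) / Δ)) = y := by
  induction n with
  | zero =>
    intro y h0 hn
    simp only [Nat.cast_zero, zero_mul] at hn
    simp [le_antisymm hn h0]
  | succ n ih =>
    intro y h0 hn
    rw [Finset.sum_range_succ]
    rcases le_or_gt y (n * Δ) with hy | hy
    · have hlast : min 1 (max 0 ((y - n * Δ) / Δ)) = 0 := by
        have : (y - n * Δ) / Δ ≤ 0 := div_nonpos_of_nonpos_of_nonneg (by linarith) hΔ.le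
        rw [max_eq_left this, min_eq_right zero_le_one]
      rw [hlast, add_zero, ih y h0 hy]
    · have hall : ∀ j ∈ Finset.range n, min 1 (max 0 ((y - j * Δ) / Δ)) = 1 := by
        intro j hj
        have hj' : (j : ℝ) + 1 ≤ n := by
          have := Finset.mem_range.mp hj
          exact_mod_cast Nat.succ_le_of_lt this
        have h1 : 1 ≤ (y - j * Δ) / Δ := by
          rw [le_div_iff₀ hΔ, one_mul]
          nlinarith
        rw [max_eq_right (le_trans zero_le_one h1), min_eq_left h1]
      rw [Finset.sum_congr rfl hall]
      have hlast : min 1 (max 0 ((y - n * Δ) / Δ)) = (y - n * Δ) / Δ := by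
        have hpos : 0 ≤ (y - n * Δ) / Δ := div_nonneg (by linarith) hΔ.le
        have hle1 : (y - n * Δ) / Δ ≤ 1 := by
          rw [div_le_one hΔ]
          push_cast at hn
          linarith
        rw [max_eq_right hpos, min_eq_right hle1]
      rw [hlast, Finset.sum_const, Finset.card_range, nsmul_eq_mul, mul_one]
      field_simp
      ring

variable [MeasurableSpace X] [BorelSpace X]

/-- A Riesz-type representation: from a positive linear functional we get a Borel
measure with the desired one-sided properties. -/
theorem exists_riesz (L : C(X, ℝ) → ℝ)
    (hadd : ∀ f g : C(X, ℝ), L (f + g) = L f + L g)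
    (hsmul : ∀ (c : ℝ) (f : C(X, ℝ)), L (c • f) = c * L f)
    (hpos : ∀ f : C(X, ℝ), (∀ x, 0 ≤ f x) → 0 ≤ L f) :
    ∃ μ : Measure X, μ Set.univ = ENNReal.ofReal (L 1) ∧
      (∀ U : Set X, IsOpen U → μ U ≤ rho L U) ∧
      (∀ f : C(X, ℝ), L f ≤ ∫ x, f x ∂μ) := by
  have hborel : (inferInstance : MeasurableSpace X) ≤ (mstar L hadd).caratheodory := by
    rw [BorelSpace.measurable_eq (α := X)]
    exact (mstar_isMetric L hadd hpos).borel_le_caratheodory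
  set μ : Measure X := (mstar L hadd).toMeasure hborel with hμ
  have hμopen : ∀ U : Set X, IsOpen U → μ U = rho L U := by
    intro U hU
    rw [hμ, toMeasure_apply _ _ hU.measurableSet, mstar_open L hadd hpos hU]
  have hone : (1 : C(X, ℝ)) ∈ Adm (Set.univ : Set X) :=
    ⟨Set.subset_univ _, fun x => by simp⟩
  have hrho_univ : rho L (Set.univ : Set X) = ENNReal.ofReal (L 1) :=
    le_antisymm (rho_le_one L hadd hpos _) (ofReal_L_le_rho L hone)
  have hμuniv : μ Set.univ = ENNReal.ofReal (L 1) := by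
    rw [hμopen _ isOpen_univ, hrho_univ]
  haveI : IsFiniteMeasure μ := ⟨by rw [hμuniv]; exact ENNReal.ofReal_lt_top⟩
  have hL1 : 0 ≤ L 1 := hpos 1 (fun x => by simp)
  have hmass : (μ Set.univ).toReal = L 1 := by rw [hμuniv, ENNReal.toReal_ofReal hL1]
  refine ⟨μ, hμuniv, fun U hU => le_of_eq (hμopen U hU), ?_⟩
  -- the key inequality
  intro f
  have hint : ∀ g : C(X, ℝ), Integrable (fun x => g x) μ :=
    fun g => (map_continuous g).integrable_of_hasCompactSupport
      (HasCompactSupport.of_compactSpace _)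
  refine le_of_forall_pos_le_add fun ε hε => ?_
  set c : ℝ := ‖f‖ + 1 with hc
  have hc0 : 0 < c := by positivity
  set h : C(X, ℝ) := f + ContinuousMap.const X c with hh
  have habs : ∀ x, |f x| ≤ ‖f‖ := fun x => by
    simpa [Real.norm_eq_abs] using f.norm_coe_le_norm x
  have hh1 : ∀ x, 1 ≤ h x := by
    intro x
    have := (abs_le.mp (habs x)).1
    simp only [hh, ContinuousMap.add_apply, ContinuousMap.const_apply]
    linarith
  have hh2 : ∀ x, h x ≤ 2 * c - 1 := by
    intro x
    have := (abs_le.mp (habs x)).2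
    simp only [hh, ContinuousMap.add_apply, ContinuousMap.const_apply]
    linarith
  obtain ⟨n, hn⟩ := exists_nat_ge (4 * c * L 1 / ε + 4 * c)
  have hn4c : 4 * c ≤ n := by
    have : 0 ≤ 4 * c * L 1 / ε := by positivity
    linarith
  have hn0 : 0 < (n : ℝ) := by linarith
  set Δ : ℝ := 2 * c / n with hΔdef
  have hΔ : 0 < Δ := by positivity
  have h2Δ : 2 * Δ ≤ 1 := by
    rw [hΔdef, show (2:ℝ) * (2 * c / ↑n) = 4 * c / ↑n by ring, div_le_one hn0]
    exact hn4c
  have hΔε : 2 * Δ * L 1 ≤ ε := by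
    have h1 : 4 * c * L 1 / ε ≤ (n : ℝ) := by linarith
    have h2 : 4 * c * L 1 ≤ (n : ℝ) * ε := by
      rw [div_le_iff₀ hε] at h1; linarith
    rw [hΔdef, show (2:ℝ) * (2 * c / ↑n) * L 1 = 4 * c * L 1 / ↑n by ring,
      div_le_iff₀ hn0]
    linarith
  have hnΔ : (n : ℝ) * Δ = 2 * c := by
    rw [hΔdef]; field_simp
  -- the clamp functions
  set gj : ℝ → C(X, ℝ) := fun a =>
    ⟨fun x => min 1 (max 0 ((h x - a) / Δ)), by
      exact continuous_const.min (continuous_const.max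
        (((map_continuous h).sub continuous_const).div_const _))⟩ with hgjdef
  have hgj0 : ∀ a x, 0 ≤ gj a x := fun a x => le_min zero_le_one (le_max_left _ _)
  have hgj1 : ∀ a x, gj a x ≤ 1 := fun a x => min_le_left _ _
  have hgjapp : ∀ a x, gj a x = min 1 (max 0 ((h x - a) / Δ)) := fun a x => rfl
  -- the open superlevel sets
  set O : ℕ → Set X := fun j => {x | (j : ℝ) * Δ - Δ < h x} with hO
  have hOopen : ∀ j, IsOpen (O j) := fun j =>
    isOpen_lt continuous_const (map_continuous h)
  -- staircase identity for h
  have hid : ∀ x, Δ * ∑ j ∈ Finset.range n, gj ((j : ℝ) * Δ) x = h x := by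
    intro x
    exact staircase hΔ n (h x) (by linarith [hh1 x]) (by rw [hnΔ]; linarith [hh2 x])
  -- staircase identity for h + 2Δ
  have hid2 : ∀ x, Δ * ∑ j ∈ Finset.range n, gj (((j : ℝ) - 2) * Δ) x = h x + 2 * Δ := by
    intro x
    have hs := staircase hΔ n (h x + 2 * Δ) (by linarith [hh1 x, hΔ])
      (by rw [hnΔ]; linarith [hh2 x, h2Δ])
    rw [← hs]
    congr 1
    refine Finset.sum_congr rfl fun j _ => ?_
    rw [hgjapp]
    congr 2
    ring
  -- L of each clamp is at most the measure of the open superlevel set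
  have hstep : ∀ j : ℕ, L (gj ((j : ℝ) * Δ)) ≤ (μ (O j)).toReal := by
    intro j
    have hAdm : gj ((j : ℝ) * Δ) ∈ Adm (O j) := by
      refine ⟨?_, fun x => ⟨hgj0 _ x, hgj1 _ x⟩⟩
      have hsupp : Function.support (gj ((j : ℝ) * Δ)) ⊆ {x | (j : ℝ) * Δ ≤ h x} := by
        intro x hx
        simp only [Function.mem_support] at hx
        by_contra hcon
        simp only [Set.mem_setOf_eq, not_le] at hcon
        refine hx ?_
        rw [hgjapp, max_eq_left (div_nonpos_of_nonpos_of_nonneg (by linarith) hΔ.le),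
          min_eq_right zero_le_one]
      refine (closure_minimal hsupp (isClosed_le continuous_const (map_continuous h))).trans ?_
      intro x hx
      simp only [Set.mem_setOf_eq] at hx
      show (j : ℝ) * Δ - Δ < h x
      linarith
    have h1 : ENNReal.ofReal (L (gj ((j : ℝ) * Δ))) ≤ μ (O j) := by
      rw [hμopen _ (hOopen j)]
      exact ofReal_L_le_rho L hAdm
    have h2 : 0 ≤ L (gj ((j : ℝ) * Δ)) := hpos _ fun x => hgj0 _ x
    calc L (gj ((j : ℝ) * Δ)) = (ENNReal.ofReal (L (gj ((j : ℝ) * Δ)))).toReal := by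
          rw [ENNReal.toReal_ofReal h2]
      _ ≤ (μ (O j)).toReal := ENNReal.toReal_mono (measure_ne_top μ _) h1
  -- the measure of the superlevel set is at most the integral of the shifted clamp
  have hstep2 : ∀ j : ℕ, (μ (O j)).toReal ≤ ∫ x, gj (((j : ℝ) - 2) * Δ) x ∂μ := by
    intro j
    rw [← measureReal_def, ← integral_indicator_one (hOopen j).measurableSet]
    refine integral_mono ((integrable_const (1 : ℝ)).indicator (hOopen j).measurableSet)
      (hint _) ?_
    intro x
    by_cases hx : x ∈ O j
    · rw [Set.indicator_of_mem hx]
      simp only [Pi.one_apply]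
      have hxO : (j : ℝ) * Δ - Δ < h x := hx
      have : (1 : ℝ) ≤ (h x - ((j : ℝ) - 2) * Δ) / Δ := by
        rw [le_div_iff₀ hΔ, one_mul]
        nlinarith
      rw [hgjapp, max_eq_right (le_trans zero_le_one this), min_eq_left this]
    · rw [Set.indicator_of_notMem hx]
      exact hgj0 _ x
  -- assemble
  have hLh : L h = Δ * ∑ j ∈ Finset.range n, L (gj ((j : ℝ) * Δ)) := by
    have hhid : h = Δ • ∑ j ∈ Finset.range n, gj ((j : ℝ) * Δ) := by
      ext x
      simp only [ContinuousMap.smul_apply, ContinuousMap.sum_apply, smul_eq_mul]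
      exact (hid x).symm
    rw [hhid, hsmul, L_sum L hadd]
  have hchain : L h ≤ (∫ x, h x ∂μ) + 2 * Δ * L 1 := by
    have e1 : L h ≤ Δ * ∑ j ∈ Finset.range n, (μ (O j)).toReal := by
      rw [hLh]
      exact mul_le_mul_of_nonneg_left (Finset.sum_le_sum fun j _ => hstep j) hΔ.le
    have e2 : Δ * ∑ j ∈ Finset.range n, (μ (O j)).toReal
        ≤ Δ * ∑ j ∈ Finset.range n, ∫ x, gj (((j : ℝ) - 2) * Δ) x ∂μ :=
      mul_le_mul_of_nonneg_left (Finset.sum_le_sum fun j _ => hstep2 j) hΔ.le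
    have e3 : Δ * ∑ j ∈ Finset.range n, ∫ x, gj (((j : ℝ) - 2) * Δ) x ∂μ
        = (∫ x, h x ∂μ) + 2 * Δ * L 1 := by
      rw [← integral_finset_sum _ (fun j _ => hint _)]
      rw [show Δ * ∫ x, ∑ j ∈ Finset.range n, gj (((j : ℝ) - 2) * Δ) x ∂μ
          = Δ • ∫ x, ∑ j ∈ Finset.range n, gj (((j : ℝ) - 2) * Δ) x ∂μ from rfl,
        ← integral_smul]
      have : ∫ x, Δ • ∑ j ∈ Finset.range n, gj (((j : ℝ) - 2) * Δ) x ∂μ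
          = ∫ x, (h x + 2 * Δ) ∂μ := by
        refine integral_congr_ae (Filter.Eventually.of_forall fun x => ?_)
        simpa [smul_eq_mul] using hid2 x
      rw [this, integral_add (hint h) (integrable_const _), integral_const, measureReal_def, hmass,
        smul_eq_mul]
      ring
    linarith
  -- unfold h
  have hconst : L (ContinuousMap.const X c) = c * L 1 := by
    have : ContinuousMap.const X c = c • (1 : C(X, ℝ)) := by
      ext x; simp
    rw [this, hsmul]
  have hLf : L h = L f + c * L 1 := by rw [hh, hadd, hconst]
  have hIf : (∫ x, h x ∂μ) = (∫ x, f x ∂μ) + c * L 1 := by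
    have : (∫ x, h x ∂μ) = ∫ x, (f x + c) ∂μ := by
      refine integral_congr_ae (Filter.Eventually.of_forall fun x => ?_)
      simp [hh]
    rw [this, integral_add (hint f) (integrable_const _), integral_const, measureReal_def, hmass, smul_eq_mul]
    ring
  rw [hLf] at hchain
  rw [hIf] at hchain
  linarith

end Stmt5Aux

namespace Stmt5Aux

/-- Every bounded real sequence has a limit along an ultrafilter. -/
lemma exists_lim (𝒰 : Ultrafilter ℕ) (u : ℕ → ℝ) (B : ℝ) (hb : ∀ i, |u i| ≤ B) :
    ∃ l : ℝ, Tendsto u 𝒰 (𝓝 l) := by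
  have hle : (𝒰.map u : Filter ℝ) ≤ 𝓟 (Set.Icc (-B) B) := by
    rw [le_principal_iff]
    exact Filter.mem_map.mpr (Filter.Eventually.of_forall fun i => abs_le.mp (hb i))
  obtain ⟨l, -, hl⟩ := isCompact_Icc.ultrafilter_le_nhds (𝒰.map u) hle
  exact ⟨l, hl⟩

variable {X : Type*} [MetricSpace X] [CompactSpace X] [MeasurableSpace X] [BorelSpace X]

/-- From `r < bestConst F K` we can extract a measure of mass exactly `r`. -/
lemma exists_measure_mass_eq (F : Set C(X, ℝ)) (K : Set X) (r : ℝ≥0)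
    (hr : (r : ℝ≥0∞) < bestConst F K) :
    ∃ μ : Measure X, IsFiniteMeasure μ ∧ μ Kᶜ = 0 ∧ Phi F μ ≤ 1 ∧
      μ Set.univ = (r : ℝ≥0∞) := by
  obtain ⟨m, hm, hrm⟩ := lt_sSup_iff.mp hr
  obtain ⟨μ, hfin, hK, hΦ, hmμ⟩ := hm
  haveI := hfin
  have hm0 : m ≠ 0 := ((zero_le.trans_lt hrm)).ne'
  have hmtop : m ≠ ⊤ := by rw [← hmμ]; exact (measure_lt_top μ _).ne
  set c : ℝ≥0∞ := (r : ℝ≥0∞) / m with hcdef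
  have hctop : c ≠ ⊤ := (ENNReal.div_lt_top ENNReal.coe_ne_top hm0).ne
  have hc1 : c ≤ 1 := ENNReal.div_le_of_le_mul (by rw [one_mul]; exact hrm.le)
  have hmass : (c • μ) Set.univ = (r : ℝ≥0∞) := by
    rw [Measure.smul_apply, smul_eq_mul, hmμ]
    exact ENNReal.div_mul_cancel hm0 hmtop
  refine ⟨c • μ, ⟨by rw [hmass]; exact ENNReal.coe_lt_top⟩, ?_, ?_, hmass⟩
  · rw [Measure.smul_apply, smul_eq_mul, hK, mul_zero]
  · refine iSup₂_le fun f hf => ?_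
    have h1 : ∫ x, f x ∂(c • μ) = c.toReal • ∫ x, f x ∂μ := integral_smul_measure ..
    rw [h1, smul_eq_mul, ENNReal.ofReal_mul ENNReal.toReal_nonneg,
      ENNReal.ofReal_toReal hctop]
    calc c * ENNReal.ofReal (∫ x, f x ∂μ)
        ≤ c * Phi F μ := by
          exact mul_le_mul_right (le_iSup₂ (f := fun f (_ : f ∈ F) =>
            ENNReal.ofReal (∫ x, f x ∂μ)) f hf) c
      _ ≤ c * 1 := mul_le_mul_right hΦ c
      _ ≤ 1 := by rw [mul_one]; exact hc1

end Stmt5Aux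


theorem stmt_5 {X : Type*} [MetricSpace X] [CompactSpace X]
    [MeasurableSpace X] [BorelSpace X]
    (F : Set C(X, ℝ)) (hF : F.Nonempty) (hFneg : ∀ f ∈ F, -f ∈ F)
    (K : ℕ → Set X) (K₀ : Set X)
    (hKc : ∀ i, IsCompact (K i)) (hKne : ∀ i, (K i).Nonempty)
    (hK₀c : IsCompact K₀) (hK₀ne : K₀.Nonempty)
    (hconv : Tendsto (fun i => Metric.hausdorffDist (K i) K₀) atTop (𝓝 0)) :
    limsup (fun i => bestConst F (K i)) atTop ≤ bestConst F K₀ := by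
  classical
  open Stmt5Aux in
  refine ENNReal.le_of_forall_nnreal_lt fun r hr => ?_
  have hfreq : ∃ᶠ i in atTop, (r : ℝ≥0∞) < bestConst F (K i) :=
    frequently_lt_of_lt_limsup (by isBoundedDefault) hr
  set S : Set ℕ := {i | (r : ℝ≥0∞) < bestConst F (K i)} with hSdef
  haveI hNB : (atTop ⊓ 𝓟 S).NeBot := frequently_iff_neBot.mp hfreq
  set 𝒰 : Ultrafilter ℕ := Ultrafilter.of (atTop ⊓ 𝓟 S) with h𝒰def
  have h𝒰le : (𝒰 : Filter ℕ) ≤ atTop ⊓ 𝓟 S := Ultrafilter.of_le _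
  have h𝒰top : (𝒰 : Filter ℕ) ≤ atTop := h𝒰le.trans inf_le_left
  have hSU : S ∈ 𝒰 := le_principal_iff.mp (h𝒰le.trans inf_le_right)
  -- choose measures of mass exactly r on S
  have hex : ∀ i, i ∈ S → ∃ μ : Measure X, IsFiniteMeasure μ ∧ μ (K i)ᶜ = 0 ∧
      Phi F μ ≤ 1 ∧ μ Set.univ = (r : ℝ≥0∞) :=
    fun i hi => Stmt5Aux.exists_measure_mass_eq F (K i) r hi
  choose μof hμof using hex
  set νs : ℕ → Measure X := fun i => if h : i ∈ S then μof i h else 0 with hνdef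
  haveI hfin' : ∀ i, IsFiniteMeasure (νs i) := by
    intro i
    by_cases h : i ∈ S
    · simp only [hνdef, dif_pos h]; exact (hμof i h).1
    · simp only [hνdef, dif_neg h]; infer_instance
  have hsupp' : ∀ i, νs i (K i)ᶜ = 0 := by
    intro i
    by_cases h : i ∈ S
    · simp only [hνdef, dif_pos h]; exact (hμof i h).2.1
    · simp only [hνdef, dif_neg h]; rfl
  have hmass' : ∀ i, νs i Set.univ ≤ (r : ℝ≥0∞) := by
    intro i
    by_cases h : i ∈ S
    · simp only [hνdef, dif_pos h]; exact le_of_eq (hμof i h).2.2.2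
    · simp only [hνdef, dif_neg h]; simp
  have hmassS : ∀ i ∈ S, νs i Set.univ = (r : ℝ≥0∞) := fun i h => by
    simp only [hνdef, dif_pos h]; exact (hμof i h).2.2.2
  have hphiS : ∀ i ∈ S, Phi F (νs i) ≤ 1 := fun i h => by
    simp only [hνdef, dif_pos h]; exact (hμof i h).2.2.1
  -- integrability and bounds
  have hint' : ∀ (g : C(X, ℝ)) i, Integrable (fun x => g x) (νs i) :=
    fun g i => (map_continuous g).integrable_of_hasCompactSupport
      (HasCompactSupport.of_compactSpace _)
  have hbound : ∀ (g : C(X, ℝ)) i, |∫ x, g x ∂(νs i)| ≤ ‖g‖ * (r : ℝ) := by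
    intro g i
    have h1 : ‖∫ x, g x ∂(νs i)‖ ≤ ‖g‖ * ((νs i) Set.univ).toReal :=
      norm_integral_le_of_norm_le_const
        (Filter.Eventually.of_forall fun x => g.norm_coe_le_norm x)
    have h2 : ((νs i) Set.univ).toReal ≤ (r : ℝ) := by
      have := ENNReal.toReal_mono ENNReal.coe_ne_top (hmass' i)
      simpa using this
    calc |∫ x, g x ∂(νs i)| = ‖∫ x, g x ∂(νs i)‖ := (Real.norm_eq_abs _).symm
      _ ≤ ‖g‖ * ((νs i) Set.univ).toReal := h1
      _ ≤ ‖g‖ * (r : ℝ) := mul_le_mul_of_nonneg_left h2 (norm_nonneg g)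
  -- the limit functional
  choose Lfun hL using fun g : C(X, ℝ) =>
    Stmt5Aux.exists_lim 𝒰 (fun i => ∫ x, g x ∂(νs i)) (‖g‖ * (r : ℝ)) (hbound g)
  have hadd : ∀ f g : C(X, ℝ), Lfun (f + g) = Lfun f + Lfun g := by
    intro f g
    refine tendsto_nhds_unique (hL (f + g)) ?_
    have : (fun i => ∫ x, (f + g) x ∂(νs i))
        = fun i => (∫ x, f x ∂(νs i)) + ∫ x, g x ∂(νs i) := by
      funext i
      simp only [ContinuousMap.add_apply]
      exact integral_add (hint' f i) (hint' g i)
    rw [this]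
    exact (hL f).add (hL g)
  have hsmul : ∀ (c : ℝ) (f : C(X, ℝ)), Lfun (c • f) = c * Lfun f := by
    intro c f
    refine tendsto_nhds_unique (hL (c • f)) ?_
    have : (fun i => ∫ x, (c • f) x ∂(νs i)) = fun i => c * ∫ x, f x ∂(νs i) := by
      funext i
      simp only [ContinuousMap.smul_apply]
      rw [integral_smul, smul_eq_mul]
    rw [this]
    exact (hL f).const_mul c
  have hpos : ∀ f : C(X, ℝ), (∀ x, 0 ≤ f x) → 0 ≤ Lfun f := by
    intro f hf
    exact ge_of_tendsto (hL f)
      (Filter.Eventually.of_forall fun i => integral_nonneg hf)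
  -- the representing measure
  obtain ⟨μ, hμuniv, hμopen, hμle⟩ := Stmt5Aux.exists_riesz Lfun hadd hsmul hpos
  -- total mass
  have hL1 : Lfun 1 = (r : ℝ) := by
    refine tendsto_nhds_unique (hL 1) ((tendsto_congr' ?_).mpr tendsto_const_nhds)
    filter_upwards [hSU] with i hi
    have : ∫ x, (1 : C(X, ℝ)) x ∂(νs i) = ((νs i) Set.univ).toReal := by
      simp [integral_const, measureReal_def]
    rw [this, hmassS i hi]
    simp
  have hμuniv' : μ Set.univ = (r : ℝ≥0∞) := by
    rw [hμuniv, hL1, ENNReal.ofReal_coe_nnreal]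
  haveI : IsFiniteMeasure μ := ⟨by rw [hμuniv']; exact ENNReal.coe_lt_top⟩
  -- support
  have hμK₀ : μ K₀ᶜ = 0 := by
    refine le_antisymm (le_trans (hμopen _ hK₀c.isClosed.isOpen_compl) ?_) zero_le
    refine iSup₂_le fun g hg => ?_
    suffices hLg : Lfun g = 0 by simp [hLg]
    refine tendsto_nhds_unique (hL g) ((tendsto_congr' ?_).mpr tendsto_const_nhds)
    have hK₀sub : K₀ ⊆ (tsupport g)ᶜ := Set.subset_compl_comm.mp hg.1
    obtain ⟨δ, hδpos, hδsub⟩ := hK₀c.exists_thickening_subset_open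
      (isOpen_compl_iff.mpr (isClosed_tsupport g)) hK₀sub
    have h1 : ∀ᶠ i in atTop, Metric.hausdorffDist (K i) K₀ < δ :=
      hconv.eventually (gt_mem_nhds hδpos)
    have h1' : ∀ᶠ i in (𝒰 : Filter ℕ), Metric.hausdorffDist (K i) K₀ < δ := h𝒰top h1
    refine h1'.mono fun i hi => ?_
    have hKsub : K i ⊆ Metric.thickening δ K₀ := by
      intro x hx
      have hfin := Metric.hausdorffEdist_ne_top_of_nonempty_of_bounded (hKne i) hK₀ne
        (hKc i).isBounded hK₀c.isBounded
      have h2 := Metric.infDist_le_hausdorffDist_of_mem hx hfin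
      exact (Metric.mem_thickening_iff_infDist_lt hK₀ne).mpr (lt_of_le_of_lt h2 hi)
    have hnull : νs i {x | g x ≠ 0} = 0 := by
      refine measure_mono_null ?_ (hsupp' i)
      intro x hx
      simp only [Set.mem_setOf_eq] at hx
      have hxT : x ∈ tsupport g := subset_closure (Function.mem_support.mpr hx)
      intro hxK
      exact hδsub (hKsub hxK) hxT
    refine integral_eq_zero_of_ae ?_
    rw [Filter.EventuallyEq, ae_iff]
    simpa using hnull
  -- Phi bound
  have hPhi : Phi F μ ≤ 1 := by
    refine iSup₂_le fun f hf => ?_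
    have h1 : Lfun f ≤ 1 := by
      refine le_of_tendsto (hL f) ?_
      filter_upwards [hSU] with i hi
      have h2 : ENNReal.ofReal (∫ x, f x ∂(νs i)) ≤ 1 :=
        le_trans (le_iSup₂ (f := fun f (_ : f ∈ F) =>
          ENNReal.ofReal (∫ x, f x ∂(νs i))) f hf) (hphiS i hi)
      exact ENNReal.ofReal_le_one.mp h2
    have h2 : ∫ x, f x ∂μ ≤ Lfun f := by
      have h3 := hμle (-f)
      have h4 : Lfun (-f) = - Lfun f := by
        have := hsmul (-1) f
        simpa [neg_one_smul] using this
      have h5 : ∫ x, (-f) x ∂μ = - ∫ x, f x ∂μ := by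
        simp only [ContinuousMap.neg_apply]
        exact integral_neg _
      rw [h4, h5] at h3
      linarith
    calc ENNReal.ofReal (∫ x, f x ∂μ) ≤ ENNReal.ofReal (Lfun f) :=
          ENNReal.ofReal_le_ofReal h2
      _ ≤ 1 := ENNReal.ofReal_le_one.mpr h1
  exact le_sSup ⟨μ, inferInstance, hμK₀, hPhi, hμuniv'⟩
end

section
/- Let d ≥ 1, let L > 0 and r > 0, and let γ : [0, L] → ℝ^d be a C^2 curve parametrized by arclength (‖γ'(t)‖ = 1 for all t ∈ [0, L]) whose image is contained in the closed ball of radius r centered at the origin (‖γ(t)‖ ≤ r for all t ∈ [0, L]). Then L ≤ r · (2 + ∫_0^L ‖γ''(t)‖ dt). -/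
open MeasureTheory Filter Set
open scoped Topology RealInnerProductSpace

theorem stmt_6 (d : ℕ) (hd : 1 ≤ d) (L r : ℝ) (hL : 0 < L) (hr : 0 < r)
    (γ γ' γ'' : ℝ → EuclideanSpace ℝ (Fin d))
    (hγ' : ∀ t ∈ Icc (0 : ℝ) L, HasDerivWithinAt γ (γ' t) (Icc (0 : ℝ) L) t)
    (hγ'' : ∀ t ∈ Icc (0 : ℝ) L, HasDerivWithinAt γ' (γ'' t) (Icc (0 : ℝ) L) t)
    (hcont : ContinuousOn γ'' (Icc (0 : ℝ) L))
    (harc : ∀ t ∈ Icc (0 : ℝ) L, ‖γ' t‖ = 1)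
    (hball : ∀ t ∈ Icc (0 : ℝ) L, ‖γ t‖ ≤ r) :
    L ≤ r * (2 + ∫ t in (0 : ℝ)..L, ‖γ'' t‖) := by
  set f : ℝ → ℝ := fun t => ⟪γ t, γ' t⟫ with hf
  have hLle : (0 : ℝ) ≤ L := hL.le
  have hmem0 : (0 : ℝ) ∈ Icc (0 : ℝ) L := ⟨le_refl 0, hLle⟩
  have hmemL : L ∈ Icc (0 : ℝ) L := ⟨hLle, le_refl L⟩
  -- derivative of f on Icc
  have hfderiv : ∀ t ∈ Icc (0 : ℝ) L,
      HasDerivWithinAt f (1 + ⟪γ t, γ'' t⟫) (Icc (0 : ℝ) L) t := by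
    intro t ht
    have h := (hγ' t ht).inner ℝ (hγ'' t ht)
    have hnorm : ⟪γ' t, γ' t⟫ = 1 := by
      rw [real_inner_self_eq_norm_sq, harc t ht]; norm_num
    have : ⟪γ t, γ'' t⟫ + ⟪γ' t, γ' t⟫ = 1 + ⟪γ t, γ'' t⟫ := by
      rw [hnorm]; ring
    rwa [this] at h
  -- continuity facts
  have hγcont : ContinuousOn γ (Icc (0 : ℝ) L) := fun t ht =>
    (hγ' t ht).continuousWithinAt
  have hγ'cont : ContinuousOn γ' (Icc (0 : ℝ) L) := fun t ht =>
    (hγ'' t ht).continuousWithinAt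
  have hfcont : ContinuousOn f (Icc (0 : ℝ) L) := by
    exact ContinuousOn.inner hγcont hγ'cont
  have hgcont : ContinuousOn (fun t => 1 + ⟪γ t, γ'' t⟫) (Icc (0 : ℝ) L) :=
    continuousOn_const.add (ContinuousOn.inner hγcont hcont)
  have hgint : IntervalIntegrable (fun t => 1 + ⟪γ t, γ'' t⟫) volume 0 L :=
    hgcont.intervalIntegrable_of_Icc hLle
  -- FTC
  have hFTC : ∫ t in (0:ℝ)..L, (1 + ⟪γ t, γ'' t⟫) = f L - f 0 := by
    apply intervalIntegral.integral_eq_sub_of_hasDeriv_right_of_le hLle hfcont _ hgint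
    intro x hx
    exact (hfderiv x ⟨hx.1.le, hx.2.le⟩).mono_of_mem_nhdsWithin
      (Icc_mem_nhdsGT_of_mem ⟨hx.1.le, hx.2⟩)
  have hinner_int : IntervalIntegrable (fun t => ⟪γ t, γ'' t⟫) volume 0 L :=
    ((ContinuousOn.inner hγcont hcont)).intervalIntegrable_of_Icc hLle
  have hsplit : ∫ t in (0:ℝ)..L, (1 + ⟪γ t, γ'' t⟫)
      = L + ∫ t in (0:ℝ)..L, ⟪γ t, γ'' t⟫ := by
    rw [intervalIntegral.integral_add intervalIntegrable_const hinner_int]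
    simp
  have hLeq : L = f L - f 0 - ∫ t in (0:ℝ)..L, ⟪γ t, γ'' t⟫ := by
    rw [← hFTC, hsplit]; ring
  -- bounds
  have hfbound : ∀ t ∈ Icc (0 : ℝ) L, |f t| ≤ r := by
    intro t ht
    calc |f t| ≤ ‖γ t‖ * ‖γ' t‖ := abs_real_inner_le_norm _ _
      _ = ‖γ t‖ := by rw [harc t ht, mul_one]
      _ ≤ r := hball t ht
  have hnormint : IntervalIntegrable (fun t => ‖γ'' t‖) volume 0 L :=
    hcont.norm.intervalIntegrable_of_Icc hLle
  have habs : |∫ t in (0:ℝ)..L, ⟪γ t, γ'' t⟫| ≤ r * ∫ t in (0:ℝ)..L, ‖γ'' t‖ := by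
    calc |∫ t in (0:ℝ)..L, ⟪γ t, γ'' t⟫| ≤ ∫ t in (0:ℝ)..L, |⟪γ t, γ'' t⟫| :=
          intervalIntegral.abs_integral_le_integral_abs hLle
      _ ≤ ∫ t in (0:ℝ)..L, r * ‖γ'' t‖ := by
          apply intervalIntegral.integral_mono_on hLle hinner_int.abs
            (hnormint.const_mul r)
          intro t ht
          calc |⟪γ t, γ'' t⟫| ≤ ‖γ t‖ * ‖γ'' t‖ := abs_real_inner_le_norm _ _
            _ ≤ r * ‖γ'' t‖ := by
                exact mul_le_mul_of_nonneg_right (hball t ht) (norm_nonneg _)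
      _ = r * ∫ t in (0:ℝ)..L, ‖γ'' t‖ := by
          rw [intervalIntegral.integral_const_mul]
  have h1 : f L ≤ r := (abs_le.1 (hfbound L hmemL)).2
  have h2 : -r ≤ f 0 := (abs_le.1 (hfbound 0 hmem0)).1
  have h3 : -∫ t in (0:ℝ)..L, ⟪γ t, γ'' t⟫ ≤ r * ∫ t in (0:ℝ)..L, ‖γ'' t‖ :=
    (neg_le.2 ((abs_le.1 habs).1)).trans_eq (by ring_nf)
  linarith [h1, h2, h3, hLeq]
end

section
/- Let d ≥ 1, let L > 0 and r > 0, and let γ : [0, L] → ℝ^d be a C^2 closed curve parametrized by arclength, i.e. ‖γ'(t)‖ = 1 for all t ∈ [0, L], γ(0) = γ(L), and γ'(0) = γ'(L), whose image is contained in the closed ball of radius r centered at the origin (‖γ(t)‖ ≤ r for all t ∈ [0, L]). Then L ≤ r · ∫_0^L ‖γ''(t)‖ dt. In particular, there is no closed C^2 curve in ℝ^d with vanishing curvature vector (γ'' ≡ 0). -/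
open MeasureTheory Filter Set
open scoped Topology

theorem stmt_7 (d : ℕ) (hd : 1 ≤ d) (L r : ℝ) (hL : 0 < L) (hr : 0 < r)
    (γ γ' γ'' : ℝ → EuclideanSpace ℝ (Fin d))
    (hγ' : ∀ t ∈ Icc (0 : ℝ) L, HasDerivWithinAt γ (γ' t) (Icc (0 : ℝ) L) t)
    (hγ'' : ∀ t ∈ Icc (0 : ℝ) L, HasDerivWithinAt γ' (γ'' t) (Icc (0 : ℝ) L) t)
    (hcont : ContinuousOn γ'' (Icc (0 : ℝ) L))
    (harc : ∀ t ∈ Icc (0 : ℝ) L, ‖γ' t‖ = 1)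
    (hclosed : γ 0 = γ L) (hclosed' : γ' 0 = γ' L)
    (hball : ∀ t ∈ Icc (0 : ℝ) L, ‖γ t‖ ≤ r) :
    L ≤ r * ∫ t in (0 : ℝ)..L, ‖γ'' t‖ ∧ ¬(∀ t ∈ Icc (0 : ℝ) L, γ'' t = 0) := by
  have hLle : (0:ℝ) ≤ L := hL.le
  have hγc : ContinuousOn γ (Icc 0 L) := fun t ht => (hγ' t ht).continuousWithinAt
  have hγ'c : ContinuousOn γ' (Icc 0 L) := fun t ht => (hγ'' t ht).continuousWithinAt
  set f : ℝ → ℝ := fun t => inner ℝ (γ t) (γ' t) with hf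
  have hfd : ∀ t ∈ Icc (0:ℝ) L,
      HasDerivWithinAt f (inner ℝ (γ t) (γ'' t) + inner ℝ (γ' t) (γ' t)) (Icc 0 L) t := by
    intro t ht
    exact (hγ' t ht).inner ℝ (hγ'' t ht)
  have hfd' : ∀ t ∈ Icc (0:ℝ) L,
      HasDerivWithinAt f (1 + inner ℝ (γ t) (γ'' t)) (Icc 0 L) t := by
    intro t ht
    have h1 : (inner ℝ (γ' t) (γ' t) : ℝ) = 1 := by
      rw [real_inner_self_eq_norm_sq, harc t ht]; norm_num
    have := hfd t ht
    rwa [h1, add_comm] at this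
  have hgc : ContinuousOn (fun t => (1:ℝ) + inner ℝ (γ t) (γ'' t)) (Icc 0 L) :=
    continuousOn_const.add (hγc.inner hcont)
  have hgint : IntervalIntegrable (fun t => (1:ℝ) + inner ℝ (γ t) (γ'' t)) volume 0 L :=
    hgc.intervalIntegrable_of_Icc hLle
  have hiint : IntervalIntegrable (fun t => (inner ℝ (γ t) (γ'' t) : ℝ)) volume 0 L :=
    (hγc.inner hcont).intervalIntegrable_of_Icc hLle
  have hnint : IntervalIntegrable (fun t => ‖γ'' t‖) volume 0 L :=
    hcont.norm.intervalIntegrable_of_Icc hLle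
  have hftc : (∫ t in (0:ℝ)..L, (1 + inner ℝ (γ t) (γ'' t) : ℝ)) = f L - f 0 := by
    apply intervalIntegral.integral_eq_sub_of_hasDeriv_right_of_le hLle
    · exact (hγc.inner hγ'c)
    · intro x hx
      have hx' : x ∈ Icc (0:ℝ) L := Ioo_subset_Icc_self hx
      exact ((hfd' x hx').hasDerivAt (Icc_mem_nhds hx.1 hx.2)).hasDerivWithinAt
    · exact hgint
  have hf0 : f L - f 0 = 0 := by simp [hf, hclosed, hclosed']
  have hsplit : (∫ t in (0:ℝ)..L, (1 + inner ℝ (γ t) (γ'' t) : ℝ))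
      = L + ∫ t in (0:ℝ)..L, (inner ℝ (γ t) (γ'' t) : ℝ) := by
    rw [intervalIntegral.integral_add intervalIntegrable_const hiint]
    simp
  have hLeq : L = ∫ t in (0:ℝ)..L, (-(inner ℝ (γ t) (γ'' t)) : ℝ) := by
    rw [intervalIntegral.integral_neg]
    have := hftc
    rw [hf0, hsplit] at this
    linarith
  have hmono : (∫ t in (0:ℝ)..L, (-(inner ℝ (γ t) (γ'' t)) : ℝ))
      ≤ ∫ t in (0:ℝ)..L, r * ‖γ'' t‖ := by
    apply intervalIntegral.integral_mono_on hLle hiint.neg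
      (hnint.const_mul r)
    intro t ht
    simp only [Pi.neg_apply]
    have h1 : -(inner ℝ (γ t) (γ'' t) : ℝ) ≤ ‖γ t‖ * ‖γ'' t‖ := by
      have := abs_real_inner_le_norm (γ t) (γ'' t)
      have h2 := neg_abs_le (inner ℝ (γ t) (γ'' t) : ℝ)
      linarith
    have h3 : ‖γ t‖ * ‖γ'' t‖ ≤ r * ‖γ'' t‖ :=
      mul_le_mul_of_nonneg_right (hball t ht) (norm_nonneg _)
    linarith
  have key : L ≤ r * ∫ t in (0:ℝ)..L, ‖γ'' t‖ := by
    calc L = ∫ t in (0:ℝ)..L, (-(inner ℝ (γ t) (γ'' t)) : ℝ) := hLeq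
    _ ≤ ∫ t in (0:ℝ)..L, r * ‖γ'' t‖ := hmono
    _ = r * ∫ t in (0:ℝ)..L, ‖γ'' t‖ := intervalIntegral.integral_const_mul r _
  refine ⟨key, fun hzero => ?_⟩
  have hI : (∫ t in (0:ℝ)..L, ‖γ'' t‖) = 0 := by
    rw [intervalIntegral.integral_congr (g := fun _ => (0:ℝ))]
    · simp
    · intro t ht
      rw [uIcc_of_le hLle] at ht
      simp [hzero t ht]
  rw [hI, mul_zero] at key
  linarith
end
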